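/- arXiv:2305.12023 — 2 statements merged into one kernel-verified Lean document; each statement's English description precedes it below -/
import Mathlib

section
/- Let (G,≺) be an ordered graph of maximum degree at most d, and let (G',≺') be an iterated subdivision of (G,≺), obtained by flattening all edges of G one after the other in some order. Then the overlap graph Ov(G',≺') has no K_{2d+2,2d+2} subgraph. -/
open Finset

noncomputable section
open scoped Classical
set_option linter.unusedSectionVars false
set_option linter.unusedVariables false

namespace StretchPaper

/-! ### Partitions, red graphs, component twin-width and stretch-width of graphs -/

variable {V : Type} [Fintype V] [DecidableEq V]

/-- Two parts are inhomogeneous in `G`. -/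
def Inhomog (G : SimpleGraph V) (X Y : Finset V) : Prop :=
  (∃ x ∈ X, ∃ y ∈ Y, G.Adj x y) ∧ (∃ x ∈ X, ∃ y ∈ Y, ¬ G.Adj x y)

lemma Inhomog.symm {G : SimpleGraph V} {X Y : Finset V} (h : Inhomog G X Y) :
    Inhomog G Y X := by
  obtain ⟨⟨x, hx, y, hy, hxy⟩, ⟨x', hx', y', hy', hxy'⟩⟩ := h
  exact ⟨⟨y, hy, x, hx, hxy.symm⟩, ⟨y', hy', x', hx', fun hc => hxy' hc.symm⟩⟩

/-- `P` is obtained from `Q` by merging two parts. -/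
def MergeStep (Q P : Finpartition (Finset.univ : Finset V)) : Prop :=
  ∃ A ∈ Q.parts, ∃ B ∈ Q.parts, A ≠ B ∧
    P.parts = insert (A ∪ B) ((Q.parts.erase A).erase B)

/-- `l = [P_n, …, P_1]` is a partition sequence: it starts at the partition into
singletons, ends at the partition with the single part `univ`, and each partition is
obtained from the previous one by merging two parts. -/
def IsPartitionSeq (l : List (Finpartition (Finset.univ : Finset V))) : Prop :=
  (∃ P, l.head? = some P ∧ ∀ X ∈ P.parts, X.card = 1) ∧
  (∃ P, l.getLast? = some P ∧ P.parts = {Finset.univ}) ∧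
  l.Chain' MergeStep

/-- The red graph of a partition: parts are vertices, inhomogeneous pairs are edges. -/
def redGraph (G : SimpleGraph V) (P : Finpartition (Finset.univ : Finset V)) :
    SimpleGraph {X : Finset V // X ∈ P.parts} where
  Adj X Y := X ≠ Y ∧ Inhomog G X.1 Y.1
  symm := ⟨fun X Y h => ⟨h.1.symm, h.2.symm⟩⟩
  loopless := ⟨fun X h => h.1 rfl⟩

/-- The largest number of parts contained in a single connected component of the red graph. -/
def maxRedComponentSize (G : SimpleGraph V) (P : Finpartition (Finset.univ : Finset V)) : ℕ :=
  Finset.univ.sup fun X : {X : Finset V // X ∈ P.parts} =>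
    (Finset.univ.filter fun Y => (redGraph G P).Reachable X Y).card

/-- Component twin-width. -/
def ctww (G : SimpleGraph V) : ℕ :=
  sInf { k | ∃ l, IsPartitionSeq l ∧ ∀ P ∈ l, maxRedComponentSize G P ≤ k }

section Ord
variable [LinearOrder V]

/-- The convex closure (span) of a set of vertices along the linear order. -/
def conv (X : Finset V) : Finset V :=
  Finset.univ.filter fun v => (∃ a ∈ X, a ≤ v) ∧ ∃ b ∈ X, v ≤ b

/-- Two sets are in conflict if their spans intersect. -/
def Conflict (X Y : Finset V) : Prop := (conv X ∩ conv Y).Nonempty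

/-- The union of a part `X` and of all parts adjacent to `X` in the red graph. -/
def redClosedNbhd (G : SimpleGraph V) (P : Finpartition (Finset.univ : Finset V))
    (X : Finset V) : Finset V :=
  X ∪ (P.parts.filter fun Y => Y ≠ X ∧ Inhomog G X Y).biUnion id

/-- The stretch of a part `X` of `P`: the number of parts `Y ≠ X` that conflict with the
union of `X` and all parts adjacent to `X` in the red graph (i.e. that interfere with `X`). -/
def stretchPart (G : SimpleGraph V) (P : Finpartition (Finset.univ : Finset V))
    (X : Finset V) : ℕ :=
  ((P.parts.erase X).filter fun Y => Conflict Y (redClosedNbhd G P X)).card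

/-- The stretch of a partition: the maximum stretch of a part. -/
def stretchPartition (G : SimpleGraph V) (P : Finpartition (Finset.univ : Finset V)) : ℕ :=
  P.parts.sup fun X => stretchPart G P X

/-- Stretch-width of the ordered graph `(G, ≤)`. -/
def stwOrd (G : SimpleGraph V) : ℕ :=
  sInf { k | ∃ l, IsPartitionSeq l ∧ ∀ P ∈ l, stretchPartition G P ≤ k }

end Ord

/-- Stretch-width of `G`: minimum over all linear orders on the vertices. -/
def stw (G : SimpleGraph V) : ℕ :=
  sInf (Set.range fun L : LinearOrder V => @stwOrd V _ _ L G)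


/-! ### Symmetric 0,1-matrices: stretch-width and divisions -/

variable {n : ℕ}

/-- The zone `R × C` of `M` is non-constant. -/
def NonConstZone (M : Fin n → Fin n → Bool) (R C : Finset (Fin n)) : Prop :=
  ∃ r ∈ R, ∃ r' ∈ R, ∃ c ∈ C, ∃ c' ∈ C, M r c ≠ M r' c'

/-- `D_R`: the union of `R` and of all parts `C` of `P` with `R × C` non-constant. -/
def matBag (M : Fin n → Fin n → Bool) (P : Finpartition (Finset.univ : Finset (Fin n)))
    (R : Finset (Fin n)) : Finset (Fin n) :=
  R ∪ (P.parts.filter fun C => NonConstZone M R C).biUnion id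

/-- The stretch value of a part `R` of `P`. -/
def matStretchPart (M : Fin n → Fin n → Bool) (P : Finpartition (Finset.univ : Finset (Fin n)))
    (R : Finset (Fin n)) : ℕ :=
  (P.parts.filter fun Q => Conflict Q (matBag M P R)).card

/-- The stretch value of a partition. -/
def matStretch (M : Fin n → Fin n → Bool)
    (P : Finpartition (Finset.univ : Finset (Fin n))) : ℕ :=
  P.parts.sup fun R => matStretchPart M P R

/-- Stretch-width of a symmetric 0,1-matrix. -/
def stwM (M : Fin n → Fin n → Bool) : ℕ :=
  sInf { k | ∃ l : List (Finpartition (Finset.univ : Finset (Fin n))),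
    IsPartitionSeq l ∧ ∀ P ∈ l, matStretch M P ≤ k }

/-- A symmetric division `(I_1, …, I_p)` of `[n]` into consecutive nonempty intervals;
out-of-range indices denote the empty set. -/
structure SymDiv (n : ℕ) where
  p : ℕ
  I : ℤ → Finset (Fin n)
  out_empty : ∀ j : ℤ, (j < 1 ∨ (p : ℤ) < j) → I j = ∅
  in_nonempty : ∀ j : ℤ, 1 ≤ j → j ≤ (p : ℤ) → (I j).Nonempty
  interval : ∀ j : ℤ, ∀ a ∈ I j, ∀ c ∈ I j, ∀ b : Fin n, a ≤ b → b ≤ c → b ∈ I j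
  increasing : ∀ j : ℤ, ∀ a ∈ I j, ∀ b ∈ I (j + 1), a < b
  covers : ∀ v : Fin n, ∃ j : ℤ, v ∈ I j

/-- The restriction of row `r` of `M` to the columns outside `U`. -/
def rowRestr (M : Fin n → Fin n → Bool) (U : Finset (Fin n)) (r : Fin n) :
    Fin n → Option Bool :=
  fun c => if c ∈ U then none else some (M r c)

/-- The union `I_j ∪ I_{j+1} ∪ … ∪ I_{j+k-1}`. -/
def window (D : SymDiv n) (j : ℤ) (k : ℕ) : Finset (Fin n) :=
  (Finset.Icc j (j + (k : ℤ) - 1)).biUnion D.I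

/-- The part `I_i` of `D` is `k`-wide. -/
def WidePart (M : Fin n → Fin n → Bool) (D : SymDiv n) (k : ℕ) (i : ℤ) : Prop :=
  ∀ j : ℤ, j ≤ i → i ≤ j + (k : ℤ) - 1 →
    k ≤ ((D.I i).image (rowRestr M (window D j k))).card

/-- The division `D` is `k`-wide. -/
def WideDiv (M : Fin n → Fin n → Bool) (D : SymDiv n) (k : ℕ) : Prop :=
  ∀ i : ℤ, 1 ≤ i → i ≤ (D.p : ℤ) → WidePart M D k i

/-- The division `D` is `k`-diagonal. -/
def DiagDiv (M : Fin n → Fin n → Bool) (D : SymDiv n) (k : ℕ) : Prop :=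
  ∀ i : ℤ, 1 ≤ i → i ≤ (D.p : ℤ) → ¬ WidePart M D k i

/-- `D` is obtained from `E` by merging two consecutive intervals. -/
def DivMerge (E D : SymDiv n) : Prop :=
  D.p + 1 = E.p ∧ ∃ m : ℤ, 1 ≤ m ∧ m < (E.p : ℤ) ∧
    (∀ j : ℤ, j < m → D.I j = E.I j) ∧
    D.I m = E.I m ∪ E.I (m + 1) ∧
    (∀ j : ℤ, m < j → D.I j = E.I (j + 1))

/-- `l = [D_n, …, D_1]` is a sequence of symmetric divisions: from the division into
`n` singletons to the division with one part, merging two consecutive intervals at each step. -/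
def IsDivSeq (l : List (SymDiv n)) : Prop :=
  (∃ D, l.head? = some D ∧ D.p = n) ∧
  (∃ D, l.getLast? = some D ∧ D.p = 1) ∧
  l.Chain' DivMerge


/-! ### Ordered graphs, crossing edges, overlap graphs -/

section Overlap
variable {α : Type} [LinearOrder α]

/-- The left (smaller) endpoint of an edge. -/
def eL (e : Sym2 α) : α := Sym2.lift ⟨fun a b => min a b, fun a b => min_comm a b⟩ e

/-- The right (larger) endpoint of an edge. -/
def eR (e : Sym2 α) : α := Sym2.lift ⟨fun a b => max a b, fun a b => max_comm a b⟩ e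

/-- Two edges cross: `L(e) ≺ L(f) ≺ R(e) ≺ R(f)` or `L(f) ≺ L(e) ≺ R(f) ≺ R(e)`. -/
def Cross (e f : Sym2 α) : Prop :=
  (eL e < eL f ∧ eL f < eR e ∧ eR e < eR f) ∨
  (eL f < eL e ∧ eL e < eR f ∧ eR f < eR e)

/-- The overlap graph of `(G, ≤)` has a `K_{t,t}` subgraph: two disjoint sets of `t` edges
of `G` each, such that every edge of one set crosses every edge of the other. -/
def OvHasKtt (G : SimpleGraph α) (t : ℕ) : Prop :=
  ∃ A B : Finset (Sym2 α), ↑A ⊆ G.edgeSet ∧ ↑B ⊆ G.edgeSet ∧ Disjoint A B ∧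
    A.card = t ∧ B.card = t ∧ ∀ e ∈ A, ∀ f ∈ B, Cross e f

variable [Fintype α]

/-- The interior of an edge: the vertices strictly between its endpoints. -/
def edgeInterior (e : Sym2 α) : Finset α :=
  Finset.univ.filter fun x => eL e < x ∧ x < eR e

/-- The length of an edge: the number of vertices `x` with `L(e) ≺ x ⪯ R(e)`. -/
def edgeLen (e : Sym2 α) : ℕ := (Finset.univ.filter fun x => eL e < x ∧ x ≤ eR e).card

/-- The maximum length of an edge of `S` (0 if `S` is empty). -/
def lenSup (S : Finset (Sym2 α)) : ℕ := S.sup edgeLen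

/-- A rainbow: a set of edges of `G` whose interiors are pairwise nested. -/
def IsRainbow (G : SimpleGraph α) (S : Finset (Sym2 α)) : Prop :=
  ↑S ⊆ G.edgeSet ∧
  ∀ e ∈ S, ∀ f ∈ S, edgeInterior e ⊆ edgeInterior f ∨ edgeInterior f ⊆ edgeInterior e

/-- A rainbow over the vertex `v`. -/
def IsRainbowOver (G : SimpleGraph α) (S : Finset (Sym2 α)) (v : α) : Prop :=
  IsRainbow G S ∧ ∀ e ∈ S, eL e < v ∧ v < eR e

/-- A maximum rainbow over `v`. -/
def IsMaxRainbowOver (G : SimpleGraph α) (S : Finset (Sym2 α)) (v : α) : Prop :=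
  IsRainbowOver G S v ∧ ∀ S' : Finset (Sym2 α), IsRainbowOver G S' v → S'.card ≤ S.card

end Overlap

/-! ### Balanced separators and tree-decompositions -/

section Sep
variable {V : Type} [Fintype V] [DecidableEq V]

/-- `C` is a `c`-balanced separator of `G`. -/
def IsBalancedSeparator (G : SimpleGraph V) (c : ℝ) (C : Finset V) : Prop :=
  ∃ A B : Finset V, Disjoint A B ∧ A ∪ B = Finset.univ \ C ∧
    (∀ a ∈ A, ∀ b ∈ B, ¬ G.Adj a b) ∧
    (A.card : ℝ) ≤ (1 - c) * (Fintype.card V) ∧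
    (B.card : ℝ) ≤ (1 - c) * (Fintype.card V)

/-- `(T, β)` is a tree-decomposition of `G`. -/
def IsTreeDecomp (G : SimpleGraph V) {m : ℕ} (T : SimpleGraph (Fin m))
    (β : Fin m → Finset V) : Prop :=
  T.Connected ∧ T.IsAcyclic ∧
  (∀ v : V, ∃ t, v ∈ β t) ∧
  (∀ u v : V, G.Adj u v → ∃ t, u ∈ β t ∧ v ∈ β t) ∧
  (∀ v : V, (T.induce {t | v ∈ β t}).Connected)

/-- Treewidth: the minimum width of a tree-decomposition of `G`. -/
def treewidth (G : SimpleGraph V) : ℕ :=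
  sInf { k | ∃ (m : ℕ) (T : SimpleGraph (Fin m)) (β : Fin m → Finset V),
    IsTreeDecomp G T β ∧ (Finset.univ.sup fun t => (β t).card) - 1 ≤ k }

end Sep


/-! ### Subdivisions -/

/-- The internal vertices of a walk (its support minus the two endpoints). -/
def walkInternal {W : Type} {H : SimpleGraph W} {a b : W} (p : H.Walk a b) : List W :=
  p.support.tail.dropLast

/-- `H` is obtained from `G` by subdividing every edge at least `s` times. -/
def IsSubdivisionGE {V W : Type} (G : SimpleGraph V) (H : SimpleGraph W) (s : ℕ) : Prop :=
  ∃ (φ : V ↪ W) (p : ∀ u v : V, G.Adj u v → H.Walk (φ u) (φ v)),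
    (∀ u v huv, (p u v huv).IsPath) ∧
    (∀ u v huv, s + 1 ≤ (p u v huv).length) ∧
    (∀ u v huv, p u v huv = (p v u huv.symm).reverse) ∧
    (∀ u v huv, ∀ x ∈ walkInternal (p u v huv), x ∉ Set.range φ) ∧
    (∀ u v huv, ∀ u' v' h', s(u, v) ≠ s(u', v') →
      ∀ x ∈ walkInternal (p u v huv), x ∉ walkInternal (p u' v' h')) ∧
    (∀ x : W, x ∈ Set.range φ ∨ ∃ u v huv, x ∈ walkInternal (p u v huv)) ∧
    (∀ e ∈ H.edgeSet, ∃ u v huv, e ∈ (p u v huv).edges)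

/-- Subdividing the edge `uv` of `G` once: the new vertex is `none : Option V`. -/
def subdivideOnce {V : Type} (G : SimpleGraph V) (u v : V) : SimpleGraph (Option V) where
  Adj x y :=
    match x, y with
    | some a, some b => G.Adj a b ∧ s(a, b) ≠ s(u, v)
    | some a, none => a = u ∨ a = v
    | none, some b => b = u ∨ b = v
    | none, none => False
  symm := by
    refine ⟨?_⟩
    rintro (_ | a) (_ | b) h
    · exact h
    · exact h
    · exact h
    · exact ⟨h.1.symm, by rw [Sym2.eq_swap]; exact h.2⟩
  loopless := by
    refine ⟨?_⟩
    rintro (_ | a) h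
    · exact h
    · exact G.loopless.irrefl a h.1

/-! ### Flattening (iterated subdivisions) -/

/-- The number of vertices strictly between `u` and `v`. -/
def interiorCount {V : Type} [Fintype V] [LinearOrder V] (u v : V) : ℕ :=
  (Finset.univ.filter fun x => u < x ∧ x < v).card

/-- The ordered graph `H` is obtained from `(G, ≤)` by flattening the edge `uv`, via the
order-embedding `φ` of old vertices and the new vertices `w 0, …, w h` interleaved with
the vertices between `u` and `v`. -/
def IsFlattenStepWith {V W : Type} [Fintype V] [LinearOrder V] [Fintype W] [LinearOrder W]
    (G : SimpleGraph V) (u v : V) (H : SimpleGraph W) (φ : V → W) (w : ℕ → W) : Prop :=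
  G.Adj u v ∧ u < v ∧ StrictMono φ ∧
  (∀ x : W, (∃ a : V, x = φ a) ∨ ∃ i ≤ interiorCount u v, x = w i) ∧
  (∀ a : V, ∀ i ≤ interiorCount u v, φ a ≠ w i) ∧
  (∀ i ≤ interiorCount u v,
    (Finset.univ.filter fun x => u ≤ x ∧ x ≤ v ∧ φ x < w i).card = i + 1) ∧
  (∀ a b : W, H.Adj a b ↔
    ((∃ x y : V, G.Adj x y ∧ s(x, y) ≠ s(u, v) ∧ s(a, b) = s(φ x, φ y)) ∨
     s(a, b) = s(φ u, w 0) ∨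
     (∃ i : ℕ, i + 1 ≤ interiorCount u v ∧ s(a, b) = s(w i, w (i + 1))) ∨
     s(a, b) = s(w (interiorCount u v), φ v)))

/-! ### The graphs `A_3^h` -/

/-- The graph `A_3^h` on vertex set `{0, …, 3^h − 1}`: distinct `u, v` are adjacent iff
`|⌊u/3^l⌋ − ⌊v/3^l⌋| = 3` for some `l < h`. -/
def Agraph (h : ℕ) : SimpleGraph (Fin (3 ^ h)) where
  Adj u v := u ≠ v ∧ ∃ l < h,
    ((u : ℕ) / 3 ^ l = (v : ℕ) / 3 ^ l + 3 ∨ (v : ℕ) / 3 ^ l = (u : ℕ) / 3 ^ l + 3)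
  symm := by
    refine ⟨?_⟩
    rintro u v ⟨hne, l, hl, hd⟩
    exact ⟨hne.symm, l, hl, hd.symm⟩
  loopless := ⟨fun u h => h.1 rfl⟩



/-! ### Auxiliary lemmas for the iterated-subdivision theorem -/

section FlattenAux

variable {V W : Type} [Fintype V] [LinearOrder V] [Fintype W] [LinearOrder W]
variable {G : SimpleGraph V} {u v : V} {H : SimpleGraph W} {φ : V → W} {w : ℕ → W}

/-- the set of closed-interval vertices whose image is below `w i` -/
def Sfin (φ : V → W) (w : ℕ → W) (u v : V) (i : ℕ) : Finset V :=
  Finset.univ.filter fun x => u ≤ x ∧ x ≤ v ∧ φ x < w i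

lemma flat_w_mono (hf : IsFlattenStepWith G u v H φ w) {i j : ℕ}
    (hi : i ≤ interiorCount u v) (hj : j ≤ interiorCount u v) (hij : i < j) :
    w i < w j := by
  obtain ⟨-, -, -, -, -, hcard, -⟩ := hf
  by_contra hlt
  push_neg at hlt
  have hsub : Sfin φ w u v j ⊆ Sfin φ w u v i := by
    intro x hx
    simp only [Sfin, mem_filter] at hx ⊢
    exact ⟨hx.1, hx.2.1, hx.2.2.1, lt_of_lt_of_le hx.2.2.2 hlt⟩
  have hle := Finset.card_le_card hsub
  have h1 := hcard i hi
  have h2 := hcard j hj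
  simp only [Sfin] at hle
  omega

lemma flat_w_le (hf : IsFlattenStepWith G u v H φ w) {i j : ℕ}
    (hj : j ≤ interiorCount u v) (hij : i ≤ j) : w i ≤ w j := by
  rcases eq_or_lt_of_le hij with rfl | h
  · exact le_refl _
  · exact le_of_lt (flat_w_mono hf (le_trans (le_of_lt h) hj) hj h)

lemma flat_w_inj (hf : IsFlattenStepWith G u v H φ w) {i j : ℕ}
    (hi : i ≤ interiorCount u v) (hj : j ≤ interiorCount u v) (hij : w i = w j) :
    i = j := by
  rcases lt_trichotomy i j with h | h | h
  · exact absurd hij (ne_of_lt (flat_w_mono hf hi hj h))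
  · exact h
  · exact absurd hij.symm (ne_of_lt (flat_w_mono hf hj hi h))

lemma flat_phiu_lt_w0 (hf : IsFlattenStepWith G u v H φ w) : φ u < w 0 := by
  have hcard := hf.2.2.2.2.2.1 0 (Nat.zero_le _)
  have hne : (Finset.univ.filter fun x => u ≤ x ∧ x ≤ v ∧ φ x < w 0).Nonempty := by
    rw [← Finset.card_pos, hcard]; omega
  obtain ⟨x, hx⟩ := hne
  simp only [mem_filter] at hx
  exact lt_of_le_of_lt (hf.2.2.1.monotone hx.2.1) hx.2.2.2

lemma flat_u_mem (hf : IsFlattenStepWith G u v H φ w) {i : ℕ}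
    (hi : i ≤ interiorCount u v) : u ∈ Sfin φ w u v i := by
  simp only [Sfin, mem_filter]
  exact ⟨Finset.mem_univ _, le_refl _, le_of_lt hf.2.1,
    lt_of_lt_of_le (flat_phiu_lt_w0 hf) (flat_w_le hf hi (Nat.zero_le _))⟩

lemma flat_closed_card (hf : IsFlattenStepWith G u v H φ w) :
    (Finset.univ.filter fun x : V => u ≤ x ∧ x ≤ v).card = interiorCount u v + 2 := by
  have huv := hf.2.1
  have heq : (Finset.univ.filter fun x : V => u ≤ x ∧ x ≤ v)
      = insert u (insert v (Finset.univ.filter fun x => u < x ∧ x < v)) := by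
    ext x
    simp only [mem_filter, mem_insert, Finset.mem_univ, true_and]
    constructor
    · rintro ⟨h1, h2⟩
      rcases eq_or_lt_of_le h1 with rfl | h1'
      · exact Or.inl rfl
      rcases eq_or_lt_of_le h2 with rfl | h2'
      · exact Or.inr (Or.inl rfl)
      · exact Or.inr (Or.inr ⟨h1', h2'⟩)
    · rintro (rfl | rfl | ⟨h1, h2⟩)
      · exact ⟨le_refl _, le_of_lt huv⟩
      · exact ⟨le_of_lt huv, le_refl _⟩
      · exact ⟨le_of_lt h1, le_of_lt h2⟩
  rw [heq, Finset.card_insert_of_notMem, Finset.card_insert_of_notMem]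
  · rfl
  · simp only [mem_filter, Finset.mem_univ, true_and]
    intro h; exact absurd h.2 (lt_irrefl v)
  · simp only [mem_insert, mem_filter, Finset.mem_univ, true_and]
    rintro (rfl | h)
    · exact absurd huv (lt_irrefl u)
    · exact absurd h.1 (lt_irrefl u)

lemma flat_wh_lt_phiv (hf : IsFlattenStepWith G u v H φ w) :
    w (interiorCount u v) < φ v := by
  have hcard := hf.2.2.2.2.2.1 (interiorCount u v) (le_refl _)
  have hclosed := flat_closed_card hf
  have hex : ∃ m ∈ (Finset.univ.filter fun x : V => u ≤ x ∧ x ≤ v),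
      m ∉ Sfin φ w u v (interiorCount u v) := by
    by_contra hcon
    push_neg at hcon
    have := Finset.card_le_card hcon
    simp only [Sfin] at this
    omega
  obtain ⟨m, hm1, hm2⟩ := hex
  simp only [mem_filter, Finset.mem_univ, true_and] at hm1
  simp only [Sfin, mem_filter, Finset.mem_univ, true_and] at hm2
  push_neg at hm2
  have hwm : w (interiorCount u v) ≤ φ m := hm2 hm1.1 hm1.2
  have hne : φ m ≠ w (interiorCount u v) := hf.2.2.2.2.1 m _ (le_refl _)
  exact lt_of_lt_of_le (lt_of_le_of_ne hwm (Ne.symm hne)) (hf.2.2.1.monotone hm1.2)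

lemma flat_no_between_left (hf : IsFlattenStepWith G u v H φ w) (y : W) :
    ¬ (φ u < y ∧ y < w 0) := by
  rintro ⟨h1, h2⟩
  rcases hf.2.2.2.1 y with ⟨a, rfl⟩ | ⟨i, hi, rfl⟩
  · have hua : u < a := hf.2.2.1.lt_iff_lt.mp h1
    rcases le_or_gt a v with hav | hav
    · have ha : a ∈ Sfin φ w u v 0 := by
        simp only [Sfin, mem_filter]
        exact ⟨Finset.mem_univ _, le_of_lt hua, hav, h2⟩
      have hu : u ∈ Sfin φ w u v 0 := flat_u_mem hf (Nat.zero_le _)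
      have hcard : (Sfin φ w u v 0).card = 1 := hf.2.2.2.2.2.1 0 (Nat.zero_le _)
      have : a = u := Finset.card_le_one.mp (le_of_eq hcard) _ ha _ hu
      exact absurd this (ne_of_gt hua)
    · have : φ v < φ a := hf.2.2.1 hav
      have h3 : w 0 ≤ w (interiorCount u v) := flat_w_le hf (le_refl _) (Nat.zero_le _)
      have h4 := flat_wh_lt_phiv hf
      exact absurd (lt_trans (lt_trans h4 this) h2) (not_lt_of_ge h3)
  · exact absurd h2 (not_lt_of_ge (flat_w_le hf hi (Nat.zero_le _)))

lemma flat_no_between_right (hf : IsFlattenStepWith G u v H φ w) (y : W) :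
    ¬ (w (interiorCount u v) < y ∧ y < φ v) := by
  rintro ⟨h1, h2⟩
  rcases hf.2.2.2.1 y with ⟨a, rfl⟩ | ⟨i, hi, rfl⟩
  · have hav : a < v := hf.2.2.1.lt_iff_lt.mp h2
    rcases le_or_gt u a with hua | hua
    · have hmem : a ∈ Finset.univ.filter fun x : V => u ≤ x ∧ x ≤ v := by
        simp only [mem_filter, Finset.mem_univ, true_and]
        exact ⟨hua, le_of_lt hav⟩
      have hvmem : v ∈ (Finset.univ.filter fun x : V => u ≤ x ∧ x ≤ v).erase a := by
        simp only [Finset.mem_erase, mem_filter, Finset.mem_univ, true_and]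
        exact ⟨Ne.symm (ne_of_lt hav), le_of_lt hf.2.1, le_refl _⟩
      have hsub : Sfin φ w u v (interiorCount u v) ⊆
          ((Finset.univ.filter fun x : V => u ≤ x ∧ x ≤ v).erase a).erase v := by
        intro x hx
        simp only [Sfin, mem_filter, Finset.mem_univ, true_and] at hx
        simp only [Finset.mem_erase, mem_filter, Finset.mem_univ, true_and]
        refine ⟨?_, ?_, hx.1, hx.2.1⟩
        · rintro rfl
          exact absurd hx.2.2 (not_lt_of_ge (le_of_lt (flat_wh_lt_phiv hf)))
        · rintro rfl
          exact absurd hx.2.2 (not_lt_of_ge (le_of_lt h1))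
      have hc1 := Finset.card_le_card hsub
      rw [Finset.card_erase_of_mem hvmem, Finset.card_erase_of_mem hmem,
        flat_closed_card hf] at hc1
      have hc2 := hf.2.2.2.2.2.1 (interiorCount u v) (le_refl _)
      simp only [Sfin] at hc1
      omega
    · have : φ a < φ u := hf.2.2.1 hua
      have h3 := flat_phiu_lt_w0 hf
      have h4 : w 0 ≤ w (interiorCount u v) := flat_w_le hf (le_refl _) (Nat.zero_le _)
      exact absurd (lt_trans (lt_of_lt_of_le (lt_trans this h3) h4) h1) (lt_irrefl _)
  · exact absurd h1 (not_lt_of_ge (flat_w_le hf (le_refl _) hi))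

lemma flat_center (hf : IsFlattenStepWith G u v H φ w) {i0 : ℕ}
    (hi0 : i0 + 1 ≤ interiorCount u v) :
    ∃ z : V, u < z ∧ z < v ∧ ∀ y : W, (w i0 < y ∧ y < w (i0 + 1)) ↔ y = φ z := by
  have hmono : w i0 < w (i0 + 1) :=
    flat_w_mono hf (le_trans (Nat.le_succ _) hi0) hi0 (Nat.lt_succ_self _)
  have hsub : Sfin φ w u v i0 ⊆ Sfin φ w u v (i0 + 1) := by
    intro x hx
    simp only [Sfin, mem_filter] at hx ⊢
    exact ⟨hx.1, hx.2.1, hx.2.2.1, lt_trans hx.2.2.2 hmono⟩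
  have hc1 := hf.2.2.2.2.2.1 i0 (le_trans (Nat.le_succ _) hi0)
  have hc2 := hf.2.2.2.2.2.1 (i0 + 1) hi0
  have hcard : (Sfin φ w u v (i0 + 1) \ Sfin φ w u v i0).card = 1 := by
    rw [Finset.card_sdiff_of_subset hsub]
    simp only [Sfin] at hc1 hc2 ⊢
    omega
  obtain ⟨z, hz⟩ := Finset.card_eq_one.mp hcard
  have hzmem : z ∈ Sfin φ w u v (i0 + 1) \ Sfin φ w u v i0 := by rw [hz]; exact Finset.mem_singleton_self z
  rw [Finset.mem_sdiff] at hzmem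
  obtain ⟨hz1, hz2⟩ := hzmem
  simp only [Sfin, mem_filter, Finset.mem_univ, true_and] at hz1 hz2
  push_neg at hz2
  have hwz : w i0 < φ z := by
    have := hz2 hz1.1 hz1.2.1
    exact lt_of_le_of_ne this (Ne.symm (hf.2.2.2.2.1 z i0 (le_trans (Nat.le_succ _) hi0)))
  have hzw : φ z < w (i0 + 1) := hz1.2.2
  have huz : u < z := by
    rcases eq_or_lt_of_le hz1.1 with rfl | h
    · exact absurd (lt_of_lt_of_le (flat_phiu_lt_w0 hf)
        (flat_w_le hf (le_trans (Nat.le_succ _) hi0) (Nat.zero_le _))) (not_lt_of_ge (le_of_lt hwz))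
    · exact h
  have hzv : z < v := by
    have : φ z < φ v := lt_trans (lt_of_lt_of_le hzw (flat_w_le hf (le_refl _) hi0))
      (flat_wh_lt_phiv hf)
    exact hf.2.2.1.lt_iff_lt.mp this
  refine ⟨z, huz, hzv, fun y => ⟨?_, ?_⟩⟩
  · rintro ⟨h1, h2⟩
    rcases hf.2.2.2.1 y with ⟨a, rfl⟩ | ⟨i, hi, rfl⟩
    · have hua : u < a := hf.2.2.1.lt_iff_lt.mp
        (lt_trans (lt_of_lt_of_le (flat_phiu_lt_w0 hf)
          (flat_w_le hf (le_trans (Nat.le_succ _) hi0) (Nat.zero_le _))) h1)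
      have hav : a < v := hf.2.2.1.lt_iff_lt.mp
        (lt_trans (lt_of_lt_of_le h2 (flat_w_le hf (le_refl _) hi0)) (flat_wh_lt_phiv hf))
      have hamem : a ∈ Sfin φ w u v (i0 + 1) \ Sfin φ w u v i0 := by
        rw [Finset.mem_sdiff]
        simp only [Sfin, mem_filter, Finset.mem_univ, true_and]
        exact ⟨⟨le_of_lt hua, le_of_lt hav, h2⟩, fun hcon => absurd hcon.2.2 (not_lt_of_ge (le_of_lt h1))⟩
      rw [hz, Finset.mem_singleton] at hamem
      rw [hamem]
    · rcases le_or_gt i i0 with hii | hii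
      · exact absurd h1 (not_lt_of_ge (flat_w_le hf (le_trans (Nat.le_succ _) hi0) hii))
      · exact absurd h2 (not_lt_of_ge (flat_w_le hf hi hii))
  · rintro rfl
    exact ⟨hwz, hzw⟩

lemma flat_deg (hf : IsFlattenStepWith G u v H φ w) (D : ℕ) (hD : 2 ≤ D)
    (hG : ∀ a : V, (Finset.univ.filter fun b => G.Adj a b).card ≤ D) (x : W) :
    (Finset.univ.filter fun y => H.Adj x y).card ≤ D := by
  have hchar := hf.2.2.2.2.2.2
  have hφw := hf.2.2.2.2.1
  have hinj : Function.Injective φ := hf.2.2.1.injective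
  have hIC := le_refl (interiorCount u v)
  rcases hf.2.2.2.1 x with ⟨a, rfl⟩ | ⟨i0, hi0, rfl⟩
  · by_cases hau : a = u
    · subst hau
      have hsub : (Finset.univ.filter fun y => H.Adj (φ a) y) ⊆
          insert (w 0) (((Finset.univ.filter fun b => G.Adj a b).erase v).image φ) := by
        intro y hy
        simp only [mem_filter, Finset.mem_univ, true_and] at hy
        rcases (hchar (φ a) y).mp hy with ⟨x', y', hadj, hne, heq⟩ | heq | ⟨i, hi, heq⟩ | heq
        · rcases Sym2.eq_iff.mp heq with ⟨h1, h2⟩ | ⟨h1, h2⟩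
          · have : a = x' := hinj h1
            subst this; subst h2
            refine Finset.mem_insert_of_mem (Finset.mem_image_of_mem φ ?_)
            simp only [Finset.mem_erase, mem_filter, Finset.mem_univ, true_and]
            refine ⟨?_, hadj⟩
            rintro rfl; exact hne rfl
          · have : a = y' := hinj h1
            subst this; subst h2
            refine Finset.mem_insert_of_mem (Finset.mem_image_of_mem φ ?_)
            simp only [Finset.mem_erase, mem_filter, Finset.mem_univ, true_and]
            refine ⟨?_, hadj.symm⟩
            rintro rfl; exact hne (Sym2.eq_swap)
        · rcases Sym2.eq_iff.mp heq with ⟨h1, h2⟩ | ⟨h1, h2⟩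
          · rw [h2]; exact Finset.mem_insert_self _ _
          · exact absurd h1 (hφw a 0 (Nat.zero_le _))
        · rcases Sym2.eq_iff.mp heq with ⟨h1, h2⟩ | ⟨h1, h2⟩
          · exact absurd h1 (hφw a i (le_trans (Nat.le_succ _) hi))
          · exact absurd h1 (hφw a (i + 1) hi)
        · rcases Sym2.eq_iff.mp heq with ⟨h1, h2⟩ | ⟨h1, h2⟩
          · exact absurd h1 (hφw a _ hIC)
          · exact absurd (hinj h1) (ne_of_lt hf.2.1)
      have hvmem : v ∈ Finset.univ.filter fun b => G.Adj a b := by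
        simp only [mem_filter, Finset.mem_univ, true_and]; exact hf.1
      have hc := Finset.card_le_card hsub
      have hc2 := Finset.card_insert_le (w 0) (((Finset.univ.filter fun b => G.Adj a b).erase v).image φ)
      have hc3 := Finset.card_image_le (f := φ) (s := (Finset.univ.filter fun b => G.Adj a b).erase v)
      rw [Finset.card_erase_of_mem hvmem] at hc3
      have hc4 := hG a
      have hc5 : 1 ≤ (Finset.univ.filter fun b => G.Adj a b).card :=
        Finset.card_pos.mpr ⟨v, hvmem⟩
      omega
    · by_cases hav : a = v
      · subst hav
        have hsub : (Finset.univ.filter fun y => H.Adj (φ a) y) ⊆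
            insert (w (interiorCount u a)) (((Finset.univ.filter fun b => G.Adj a b).erase u).image φ) := by
          intro y hy
          simp only [mem_filter, Finset.mem_univ, true_and] at hy
          rcases (hchar (φ a) y).mp hy with ⟨x', y', hadj, hne, heq⟩ | heq | ⟨i, hi, heq⟩ | heq
          · rcases Sym2.eq_iff.mp heq with ⟨h1, h2⟩ | ⟨h1, h2⟩
            · have : a = x' := hinj h1
              subst this; subst h2
              refine Finset.mem_insert_of_mem (Finset.mem_image_of_mem φ ?_)
              simp only [Finset.mem_erase, mem_filter, Finset.mem_univ, true_and]
              refine ⟨?_, hadj⟩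
              rintro rfl; exact hne (Sym2.eq_swap)
            · have : a = y' := hinj h1
              subst this; subst h2
              refine Finset.mem_insert_of_mem (Finset.mem_image_of_mem φ ?_)
              simp only [Finset.mem_erase, mem_filter, Finset.mem_univ, true_and]
              refine ⟨?_, hadj.symm⟩
              rintro rfl; exact hne rfl
          · rcases Sym2.eq_iff.mp heq with ⟨h1, h2⟩ | ⟨h1, h2⟩
            · exact absurd (hinj h1) (Ne.symm (ne_of_lt hf.2.1))
            · exact absurd h1 (hφw a 0 (Nat.zero_le _))
          · rcases Sym2.eq_iff.mp heq with ⟨h1, h2⟩ | ⟨h1, h2⟩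
            · exact absurd h1 (hφw a i (le_trans (Nat.le_succ _) hi))
            · exact absurd h1 (hφw a (i + 1) hi)
          · rcases Sym2.eq_iff.mp heq with ⟨h1, h2⟩ | ⟨h1, h2⟩
            · exact absurd h1 (hφw a _ hIC)
            · rw [h2]; exact Finset.mem_insert_self _ _
        have humem : u ∈ Finset.univ.filter fun b => G.Adj a b := by
          simp only [mem_filter, Finset.mem_univ, true_and]; exact hf.1.symm
        have hc := Finset.card_le_card hsub
        have hc2 := Finset.card_insert_le (w (interiorCount u a))
          (((Finset.univ.filter fun b => G.Adj a b).erase u).image φ)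
        have hc3 := Finset.card_image_le (f := φ) (s := (Finset.univ.filter fun b => G.Adj a b).erase u)
        rw [Finset.card_erase_of_mem humem] at hc3
        have hc4 := hG a
        have hc5 : 1 ≤ (Finset.univ.filter fun b => G.Adj a b).card :=
          Finset.card_pos.mpr ⟨u, humem⟩
        omega
      · have hsub : (Finset.univ.filter fun y => H.Adj (φ a) y) ⊆
            (Finset.univ.filter fun b => G.Adj a b).image φ := by
          intro y hy
          simp only [mem_filter, Finset.mem_univ, true_and] at hy
          rcases (hchar (φ a) y).mp hy with ⟨x', y', hadj, hne, heq⟩ | heq | ⟨i, hi, heq⟩ | heq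
          · rcases Sym2.eq_iff.mp heq with ⟨h1, h2⟩ | ⟨h1, h2⟩
            · have : a = x' := hinj h1
              subst this; subst h2
              refine Finset.mem_image_of_mem φ ?_
              simp only [mem_filter, Finset.mem_univ, true_and]; exact hadj
            · have : a = y' := hinj h1
              subst this; subst h2
              refine Finset.mem_image_of_mem φ ?_
              simp only [mem_filter, Finset.mem_univ, true_and]; exact hadj.symm
          · rcases Sym2.eq_iff.mp heq with ⟨h1, h2⟩ | ⟨h1, h2⟩
            · exact absurd (hinj h1) hau
            · exact absurd h1 (hφw a 0 (Nat.zero_le _))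
          · rcases Sym2.eq_iff.mp heq with ⟨h1, h2⟩ | ⟨h1, h2⟩
            · exact absurd h1 (hφw a i (le_trans (Nat.le_succ _) hi))
            · exact absurd h1 (hφw a (i + 1) hi)
          · rcases Sym2.eq_iff.mp heq with ⟨h1, h2⟩ | ⟨h1, h2⟩
            · exact absurd h1 (hφw a _ hIC)
            · exact absurd (hinj h1) hav
        have hc := Finset.card_le_card hsub
        have hc3 := Finset.card_image_le (f := φ) (s := Finset.univ.filter fun b => G.Adj a b)
        have hc4 := hG a
        omega
  · -- x = w i0
    have hsub : (Finset.univ.filter fun y => H.Adj (w i0) y) ⊆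
        {(if i0 = 0 then φ u else w (i0 - 1)), (if i0 = interiorCount u v then φ v else w (i0 + 1))} := by
      intro y hy
      simp only [mem_filter, Finset.mem_univ, true_and] at hy
      rcases (hchar (w i0) y).mp hy with ⟨x', y', hadj, hne, heq⟩ | heq | ⟨i, hi, heq⟩ | heq
      · rcases Sym2.eq_iff.mp heq with ⟨h1, h2⟩ | ⟨h1, h2⟩
        · exact absurd h1.symm (hφw x' i0 hi0)
        · exact absurd h1.symm (hφw y' i0 hi0)
      · rcases Sym2.eq_iff.mp heq with ⟨h1, h2⟩ | ⟨h1, h2⟩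
        · exact absurd h1.symm (hφw u i0 hi0)
        · have h0 : i0 = 0 := flat_w_inj hf hi0 (Nat.zero_le _) h1
          subst h0; subst h2
          simp
      · rcases Sym2.eq_iff.mp heq with ⟨h1, h2⟩ | ⟨h1, h2⟩
        · have hii : i0 = i := flat_w_inj hf hi0 (le_trans (Nat.le_succ _) hi) h1
          subst hii; subst h2
          have hne0 : i0 ≠ interiorCount u v := by omega
          rw [if_neg hne0]
          exact Finset.mem_insert_of_mem (Finset.mem_singleton_self _)
        · have hii : i0 = i + 1 := flat_w_inj hf hi0 hi h1
          subst hii; subst h2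
          simp
      · rcases Sym2.eq_iff.mp heq with ⟨h1, h2⟩ | ⟨h1, h2⟩
        · have hii : i0 = interiorCount u v := flat_w_inj hf hi0 hIC h1
          subst hii; subst h2
          rw [if_pos rfl]
          exact Finset.mem_insert_of_mem (Finset.mem_singleton_self _)
        · exact absurd h1.symm (hφw v i0 hi0)
    have hc := Finset.card_le_card hsub
    have hc2 := Finset.card_insert_le (if i0 = 0 then φ u else w (i0 - 1))
      ({(if i0 = interiorCount u v then φ v else w (i0 + 1))} : Finset W)
    simp only [Finset.card_singleton] at hc2
    omega

end FlattenAux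

section CompAux

variable {N : ℕ → ℕ}

/-- Composite of the flattening maps from step `j` to step `k`. -/
def fcomp (φs : ∀ i : ℕ, Fin (N i) → Fin (N (i + 1))) {j k : ℕ} (hjk : j ≤ k)
    (x : Fin (N j)) : Fin (N k) :=
  Nat.leRecOn (C := fun i => Fin (N i)) hjk (fun {i} y => φs i y) x

lemma fcomp_self (φs : ∀ i : ℕ, Fin (N i) → Fin (N (i + 1))) {j : ℕ} (hp : j ≤ j)
    (x : Fin (N j)) : fcomp φs hp x = x :=
  Nat.leRecOn_self (C := fun i => Fin (N i)) (next := fun {i} y => φs i y) x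

lemma fcomp_succ (φs : ∀ i : ℕ, Fin (N i) → Fin (N (i + 1))) {j k : ℕ} (h1 : j ≤ k)
    (h2 : j ≤ k + 1) (x : Fin (N j)) : fcomp φs h2 x = φs k (fcomp φs h1 x) :=
  Nat.leRecOn_succ (C := fun i => Fin (N i)) (next := fun {i} y => φs i y) h1 x

lemma fcomp_trans (φs : ∀ i : ℕ, Fin (N i) → Fin (N (i + 1))) {j k m : ℕ} (h1 : j ≤ k)
    (h2 : k ≤ m) (h3 : j ≤ m) (x : Fin (N j)) :
    fcomp φs h3 x = fcomp φs h2 (fcomp φs h1 x) :=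
  Nat.leRecOn_trans (C := fun i => Fin (N i)) (next := fun {i} y => φs i y) h1 h2 x

lemma fcomp_strictMono (φs : ∀ i : ℕ, Fin (N i) → Fin (N (i + 1))) {L : ℕ}
    (hφ : ∀ i, i < L → StrictMono (φs i)) :
    ∀ {j k : ℕ} (hjk : j ≤ k), k ≤ L → StrictMono (fun x : Fin (N j) => fcomp φs hjk x) := by
  intro j k hjk
  induction k, hjk using Nat.le_induction with
  | base =>
    intro _ a b hab
    simp only
    rw [fcomp_self φs _ a, fcomp_self φs _ b]
    exact hab
  | succ k hjk ih =>
    intro hk a b hab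
    simp only
    rw [fcomp_succ φs hjk _ a, fcomp_succ φs hjk _ b]
    exact hφ k (by omega) (ih (by omega) hab)

end CompAux

section TraceAux

lemma eL_mk {α : Type} [LinearOrder α] (x y : α) : eL s(x, y) = min x y := rfl

lemma eR_mk {α : Type} [LinearOrder α] (x y : α) : eR s(x, y) = max x y := rfl

variable {n : ℕ} {N : ℕ → ℕ}

/-- The edge `s(p,q)` of the graph at step `s+1` is one of the path edges created when
flattening the `s`-th edge of the list. -/
def NewAt (l : List (Fin n × Fin n)) (ψ : ∀ i : ℕ, Fin n → Fin (N i))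
    (φs : ∀ i : ℕ, Fin (N i) → Fin (N (i + 1))) (ws : ∀ i : ℕ, ℕ → Fin (N (i + 1)))
    (s : ℕ) (hs : s < l.length) (p q : Fin (N (s + 1))) : Prop :=
  s(p, q) = s(φs s (ψ s (l.get ⟨s, hs⟩).1), ws s 0) ∨
  (∃ i0 : ℕ, i0 + 1 ≤ interiorCount (ψ s (l.get ⟨s, hs⟩).1) (ψ s (l.get ⟨s, hs⟩).2) ∧
    s(p, q) = s(ws s i0, ws s (i0 + 1))) ∨
  s(p, q) = s(ws s (interiorCount (ψ s (l.get ⟨s, hs⟩).1) (ψ s (l.get ⟨s, hs⟩).2)),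
    φs s (ψ s (l.get ⟨s, hs⟩).2))

lemma NewAt_symm {l : List (Fin n × Fin n)} {ψ : ∀ i : ℕ, Fin n → Fin (N i)}
    {φs : ∀ i : ℕ, Fin (N i) → Fin (N (i + 1))} {ws : ∀ i : ℕ, ℕ → Fin (N (i + 1))}
    {s : ℕ} {hs : s < l.length} {p q : Fin (N (s + 1))}
    (h : NewAt l ψ φs ws s hs p q) : NewAt l ψ φs ws s hs q p := by
  unfold NewAt at h ⊢
  rcases h with h | ⟨i0, hi0, h⟩ | h
  · exact Or.inl (Sym2.eq_swap.trans h)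
  · exact Or.inr (Or.inl ⟨i0, hi0, Sym2.eq_swap.trans h⟩)
  · exact Or.inr (Or.inr (Sym2.eq_swap.trans h))

/-- The edge `e` of the graph at step `j` stems from a path edge created at step `s`. -/
def Qstep (l : List (Fin n × Fin n)) (ψ : ∀ i : ℕ, Fin n → Fin (N i))
    (φs : ∀ i : ℕ, Fin (N i) → Fin (N (i + 1))) (ws : ∀ i : ℕ, ℕ → Fin (N (i + 1)))
    (Gs : ∀ i : ℕ, SimpleGraph (Fin (N i))) (j : ℕ) (e : Sym2 (Fin (N j))) (s : ℕ) : Prop :=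
  ∃ hs : s < l.length, ∃ hsj : s + 1 ≤ j, ∃ p q : Fin (N (s + 1)),
    NewAt l ψ φs ws s hs p q ∧
    (∀ (k : ℕ) (h1 : s + 1 ≤ k), k ≤ j → s(fcomp φs h1 p, fcomp φs h1 q) ∈ (Gs k).edgeSet) ∧
    e = s(fcomp φs hsj p, fcomp φs hsj q)

lemma trace_lemma {G : SimpleGraph (Fin n)} {l : List (Fin n × Fin n)}
    {Gs : ∀ i : ℕ, SimpleGraph (Fin (N i))} {ψ : ∀ i : ℕ, Fin n → Fin (N i)}
    {φs : ∀ i : ℕ, Fin (N i) → Fin (N (i + 1))} {ws : ∀ i : ℕ, ℕ → Fin (N (i + 1))}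
    (hcover : ∀ e : Sym2 (Fin n), e ∈ G.edgeSet ↔ e ∈ l.map fun e => s(e.1, e.2))
    (hbase : StrictMono (ψ 0) ∧ Function.Surjective (ψ 0) ∧
      ∀ a b, G.Adj a b ↔ (Gs 0).Adj (ψ 0 a) (ψ 0 b))
    (hstep : ∀ (i : ℕ) (hi : i < l.length),
      IsFlattenStepWith (Gs i) (ψ i (l.get ⟨i, hi⟩).1) (ψ i (l.get ⟨i, hi⟩).2)
        (Gs (i + 1)) (φs i) (ws i))
    (hpsi : ∀ i : ℕ, ψ (i + 1) = φs i ∘ ψ i) :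
    ∀ j, j ≤ l.length → ∀ e ∈ (Gs j).edgeSet,
      (∃ k, ∃ hk : k < l.length, j ≤ k ∧
        e = s(ψ j (l.get ⟨k, hk⟩).1, ψ j (l.get ⟨k, hk⟩).2)) ∨
      ∃ s : ℕ, Qstep l ψ φs ws Gs j e s := by
  intro j
  induction j with
  | zero =>
    intro _ e he
    left
    revert he
    induction e using Sym2.ind with
    | _ x y =>
      intro he
      have hadj : (Gs 0).Adj x y := (Gs 0).mem_edgeSet.mp he
      obtain ⟨a, rfl⟩ := hbase.2.1 x
      obtain ⟨b, rfl⟩ := hbase.2.1 y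
      have hGab : G.Adj a b := (hbase.2.2 a b).mpr hadj
      have hmem : s(a, b) ∈ l.map fun e => s(e.1, e.2) :=
        (hcover s(a, b)).mp (G.mem_edgeSet.mpr hGab)
      rw [List.mem_map] at hmem
      obtain ⟨pr, hprl, hpr⟩ := hmem
      rw [List.mem_iff_get] at hprl
      obtain ⟨⟨k, hk⟩, hget⟩ := hprl
      refine ⟨k, hk, Nat.zero_le _, ?_⟩
      rw [hget]
      rcases Sym2.eq_iff.mp hpr with ⟨h1, h2⟩ | ⟨h1, h2⟩
      · rw [h1, h2]
      · rw [h1, h2, Sym2.eq_swap]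
  | succ j ih =>
    intro hj e he
    have hjL : j < l.length := hj
    revert he
    induction e using Sym2.ind with
    | _ x y =>
      intro he
      have hadj : (Gs (j + 1)).Adj x y := (Gs (j + 1)).mem_edgeSet.mp he
      rcases ((hstep j hjL).2.2.2.2.2.2 x y).mp hadj with
        ⟨x', y', hadj', hne, heq⟩ | heq | ⟨i0, hi0, heq⟩ | heq
      · rcases ih (by omega) s(x', y') ((Gs j).mem_edgeSet.mpr hadj') with
          ⟨k, hk, hjk, heq2⟩ | ⟨s, hs, hsj, p, q, hNA, hchain, heq2⟩
        · have hkj : j + 1 ≤ k := by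
            rcases Nat.lt_or_ge k (j + 1) with hlt | hge
            · exfalso
              have hkeq : k = j := by omega
              subst hkeq
              exact hne heq2
            · exact hge
          left
          refine ⟨k, hk, hkj, ?_⟩
          rw [heq, hpsi j]
          simp only [Function.comp_apply]
          rcases Sym2.eq_iff.mp heq2 with ⟨h1, h2⟩ | ⟨h1, h2⟩
          · rw [h1, h2]
          · rw [h1, h2, Sym2.eq_swap]
        · right
          refine ⟨s, hs, by omega, p, q, hNA, ?_, ?_⟩
          · intro k h1 h2
            by_cases hkj : k ≤ j
            · exact hchain k h1 hkj
            · have hkeq : k = j + 1 := by omega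
              subst hkeq
              rw [fcomp_succ φs hsj h1 p, fcomp_succ φs hsj h1 q]
              have hxy : s(φs j (fcomp φs hsj p), φs j (fcomp φs hsj q)) = s(x, y) := by
                rw [heq]
                rcases Sym2.eq_iff.mp heq2 with ⟨h1', h2'⟩ | ⟨h1', h2'⟩
                · rw [h1', h2']
                · rw [h1', h2', Sym2.eq_swap]
              rw [hxy]
              exact he
          · rw [heq]
            rw [fcomp_succ φs hsj (by omega) p, fcomp_succ φs hsj (by omega) q]
            rcases Sym2.eq_iff.mp heq2 with ⟨h1', h2'⟩ | ⟨h1', h2'⟩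
            · rw [h1', h2']
            · rw [h1', h2', Sym2.eq_swap]
      · right
        refine ⟨j, hjL, le_refl _, _, _, Or.inl rfl, ?_, ?_⟩
        · intro k h1 h2
          have hkeq : k = j + 1 := by omega
          subst hkeq
          rw [fcomp_self φs h1, fcomp_self φs h1, ← heq]
          exact he
        · rw [fcomp_self φs _, fcomp_self φs _]
          exact heq
      · right
        refine ⟨j, hjL, le_refl _, _, _, Or.inr (Or.inl ⟨i0, hi0, rfl⟩), ?_, ?_⟩
        · intro k h1 h2
          have hkeq : k = j + 1 := by omega
          subst hkeq
          rw [fcomp_self φs h1, fcomp_self φs h1, ← heq]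
          exact he
        · rw [fcomp_self φs _, fcomp_self φs _]
          exact heq
      · right
        refine ⟨j, hjL, le_refl _, _, _, Or.inr (Or.inr rfl), ?_, ?_⟩
        · intro k h1 h2
          have hkeq : k = j + 1 := by omega
          subst hkeq
          rw [fcomp_self φs h1, fcomp_self φs h1, ← heq]
          exact he
        · rw [fcomp_self φs _, fcomp_self φs _]
          exact heq

end TraceAux


/-- Any iterated subdivision of an ordered graph of maximum degree at most `d` (flattening
all edges of `G` one after the other along a chain of flatten steps) has an overlap graph
with no `K_{2d+2,2d+2}` subgraph. -/
theorem iterated_subdivision_no_Ktt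
    (d : ℕ) (hd : 1 ≤ d) (n : ℕ) (G : SimpleGraph (Fin n))
    (hdeg : ∀ v, (Finset.univ.filter fun u => G.Adj v u).card ≤ d)
    (l : List (Fin n × Fin n))
    (hnodup : (l.map fun e => s(e.1, e.2)).Nodup)
    (hcover : ∀ e : Sym2 (Fin n), e ∈ G.edgeSet ↔ e ∈ l.map fun e => s(e.1, e.2))
    (N : ℕ → ℕ) (Gs : ∀ i : ℕ, SimpleGraph (Fin (N i)))
    (ψ : ∀ i : ℕ, Fin n → Fin (N i))
    (φs : ∀ i : ℕ, Fin (N i) → Fin (N (i + 1)))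
    (ws : ∀ i : ℕ, ℕ → Fin (N (i + 1)))
    (hbase : StrictMono (ψ 0) ∧ Function.Surjective (ψ 0) ∧
      ∀ a b, G.Adj a b ↔ (Gs 0).Adj (ψ 0 a) (ψ 0 b))
    (hstep : ∀ (i : ℕ) (hi : i < l.length),
      IsFlattenStepWith (Gs i) (ψ i (l.get ⟨i, hi⟩).1) (ψ i (l.get ⟨i, hi⟩).2)
        (Gs (i + 1)) (φs i) (ws i))
    (hpsi : ∀ i : ℕ, ψ (i + 1) = φs i ∘ ψ i) :
    ¬ OvHasKtt (Gs l.length) (2 * d + 2) := by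
  intro hK
  obtain ⟨A, B, hAe, hBe, hdisj, hcA, hcB, hcross⟩ := hK
  have hφm : ∀ i, i < l.length → StrictMono (φs i) := fun i hi => (hstep i hi).2.2.1
  -- degree bound along the chain
  have hdegAll : ∀ j, j ≤ l.length → ∀ x : Fin (N j),
      (Finset.univ.filter fun y => (Gs j).Adj x y).card ≤ max d 2 := by
    intro j
    induction j with
    | zero =>
      intro _ x
      obtain ⟨a, rfl⟩ := hbase.2.1 x
      have hsub : (Finset.univ.filter fun y => (Gs 0).Adj (ψ 0 a) y) ⊆
          (Finset.univ.filter fun b => G.Adj a b).image (ψ 0) := by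
        intro y hy
        simp only [Finset.mem_filter, Finset.mem_univ, true_and] at hy
        obtain ⟨b, rfl⟩ := hbase.2.1 y
        refine Finset.mem_image_of_mem _ ?_
        simp only [Finset.mem_filter, Finset.mem_univ, true_and]
        exact (hbase.2.2 a b).mpr hy
      have h1 := Finset.card_le_card hsub
      have h2 := Finset.card_image_le (f := ψ 0) (s := Finset.univ.filter fun b => G.Adj a b)
      have h3 := hdeg a
      have h4 : d ≤ max d 2 := le_max_left d 2
      omega
    | succ j ih =>
      intro hj x
      exact flat_deg (hstep j (by omega)) (max d 2) (le_max_right d 2) (ih (by omega)) x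
  have hABne : (A ∪ B).Nonempty := by
    obtain ⟨a0, ha0⟩ := Finset.card_pos.mp (show 0 < A.card by rw [hcA]; omega)
    exact ⟨a0, Finset.mem_union_left _ ha0⟩
  have htr : ∀ e ∈ A ∪ B, ∃ s : ℕ, Qstep l ψ φs ws Gs l.length e s := by
    intro e he
    have hee : e ∈ (Gs l.length).edgeSet := by
      rcases Finset.mem_union.mp he with h | h
      · exact hAe h
      · exact hBe h
    rcases trace_lemma hcover hbase hstep hpsi l.length (le_refl _) e hee with
      ⟨k, hk, hLk, -⟩ | h
    · omega
    · exact h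
  choose σ' hσ' using htr
  obtain ⟨x0, -, hmax0⟩ := Finset.exists_max_image (A ∪ B).attach (fun x => σ' x.1 x.2)
    (Finset.attach_nonempty_iff.mpr hABne)
  rcases x0 with ⟨e0, he0U⟩
  have he0max : ∀ g (hg : g ∈ A ∪ B), σ' g hg ≤ σ' e0 he0U :=
    fun g hg => hmax0 ⟨g, hg⟩ (Finset.mem_attach _ _)
  obtain ⟨hs'L, hs'L1, p, q, hNA0, hchain0, he0eq⟩ := hσ' e0 he0U
  have hY : ∃ Y : Finset (Sym2 (Fin (N l.length))), Y.card = 2 * d + 2 ∧ Y ⊆ A ∪ B ∧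
      (∀ f ∈ Y, Cross e0 f ∨ Cross f e0) := by
    rcases Finset.mem_union.mp he0U with h | h
    · exact ⟨B, hcB, Finset.subset_union_right, fun f hf => Or.inl (hcross e0 h f hf)⟩
    · exact ⟨A, hcA, Finset.subset_union_left, fun f hf => Or.inr (hcross f hf e0 h)⟩
  obtain ⟨Y, hYcard, hYsub, hYcross⟩ := hY
  have hΨSM : StrictMono (fun x : Fin (N (σ' e0 he0U + 1)) => fcomp φs hs'L1 x) :=
    fcomp_strictMono φs hφm hs'L1 (le_refl _)
  have hmain : ∀ (α β : Fin (N (σ' e0 he0U + 1))), s(p, q) = s(α, β) → α < β →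
      ∀ f ∈ Y, ∃ sf, ∃ hsf : sf < l.length, ∃ hsfL : sf + 1 ≤ l.length,
        ∃ hsf1 : sf + 1 ≤ σ' e0 he0U + 1, ∃ a b : Fin (N (sf + 1)),
        NewAt l ψ φs ws sf hsf a b ∧
        (∀ (k : ℕ) (h1 : sf + 1 ≤ k), k ≤ l.length →
          s(fcomp φs h1 a, fcomp φs h1 b) ∈ (Gs k).edgeSet) ∧
        f = s(fcomp φs hsfL a, fcomp φs hsfL b) ∧
        α < fcomp φs hsf1 a ∧ fcomp φs hsf1 a < β := by
    intro α β hpq hab f hf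
    obtain ⟨hsf, hsfL, a, b, hNAf, hchainf, hfeq⟩ := hσ' f (hYsub hf)
    have hmaxf : σ' f (hYsub hf) ≤ σ' e0 he0U := he0max f (hYsub hf)
    have hsf1 : σ' f (hYsub hf) + 1 ≤ σ' e0 he0U + 1 := by omega
    have he0' : e0 = s(fcomp φs hs'L1 α, fcomp φs hs'L1 β) := by
      refine he0eq.trans ?_
      rcases Sym2.eq_iff.mp hpq with ⟨h1, h2⟩ | ⟨h1, h2⟩
      · rw [h1, h2]
      · rw [h1, h2, Sym2.eq_swap]
    have hΨab : fcomp φs hs'L1 α < fcomp φs hs'L1 β := hΨSM hab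
    have hfa : fcomp φs hsfL a = fcomp φs hs'L1 (fcomp φs hsf1 a) :=
      fcomp_trans φs hsf1 hs'L1 hsfL a
    have hfb : fcomp φs hsfL b = fcomp φs hs'L1 (fcomp φs hsf1 b) :=
      fcomp_trans φs hsf1 hs'L1 hsfL b
    have hcr := hYcross f hf
    rw [he0', hfeq] at hcr
    simp only [Cross, eL_mk, eR_mk] at hcr
    rw [min_eq_left (le_of_lt hΨab), max_eq_right (le_of_lt hΨab)] at hcr
    have hkey : (fcomp φs hs'L1 α < fcomp φs hsfL a ∧ fcomp φs hsfL a < fcomp φs hs'L1 β) ∨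
        (fcomp φs hs'L1 α < fcomp φs hsfL b ∧ fcomp φs hsfL b < fcomp φs hs'L1 β) := by
      have hminc := min_choice (fcomp φs hsfL a) (fcomp φs hsfL b)
      have hmaxc := max_choice (fcomp φs hsfL a) (fcomp φs hsfL b)
      rcases hcr with (⟨h1, h2, h3⟩ | ⟨h1, h2, h3⟩) | (⟨h1, h2, h3⟩ | ⟨h1, h2, h3⟩)
      · rcases hminc with hm | hm
        · rw [hm] at h1 h2; exact Or.inl ⟨h1, h2⟩
        · rw [hm] at h1 h2; exact Or.inr ⟨h1, h2⟩
      · rcases hmaxc with hm | hm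
        · rw [hm] at h2 h3; exact Or.inl ⟨h2, h3⟩
        · rw [hm] at h2 h3; exact Or.inr ⟨h2, h3⟩
      · rcases hmaxc with hm | hm
        · rw [hm] at h2 h3; exact Or.inl ⟨h2, h3⟩
        · rw [hm] at h2 h3; exact Or.inr ⟨h2, h3⟩
      · rcases hminc with hm | hm
        · rw [hm] at h1 h2; exact Or.inl ⟨h1, h2⟩
        · rw [hm] at h1 h2; exact Or.inr ⟨h1, h2⟩
    rcases hkey with ⟨h1, h2⟩ | ⟨h1, h2⟩
    · refine ⟨σ' f (hYsub hf), hsf, hsfL, hsf1, a, b, hNAf, hchainf, hfeq, ?_, ?_⟩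
      · rw [hfa] at h1; exact hΨSM.lt_iff_lt.mp h1
      · rw [hfa] at h2; exact hΨSM.lt_iff_lt.mp h2
    · refine ⟨σ' f (hYsub hf), hsf, hsfL, hsf1, b, a, NewAt_symm hNAf, ?_, ?_, ?_, ?_⟩
      · intro k hk1 hk2
        rw [Sym2.eq_swap]
        exact hchainf k hk1 hk2
      · exact hfeq.trans Sym2.eq_swap
      · rw [hfb] at h1; exact hΨSM.lt_iff_lt.mp h1
      · rw [hfb] at h2; exact hΨSM.lt_iff_lt.mp h2
  have hfstep := hstep (σ' e0 he0U) hs'L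
  rcases hNA0 with h0 | ⟨i0, hi0, h0⟩ | h0
  · -- e0 is the left boundary path edge: nothing strictly inside, contradiction
    obtain ⟨f, hf⟩ : Y.Nonempty := Finset.card_pos.mp (by rw [hYcard]; omega)
    obtain ⟨sf, hsf, hsfL, hsf1, a, b, -, -, -, hgt, hlt⟩ :=
      hmain _ _ h0 (flat_phiu_lt_w0 hfstep) f hf
    exact flat_no_between_left hfstep _ ⟨hgt, hlt⟩
  · -- e0 is an interior path edge with unique center φ z
    obtain ⟨z, huz, hzv, hziff⟩ := flat_center hfstep hi0
    have hwlt : ws (σ' e0 he0U) i0 < ws (σ' e0 he0U) (i0 + 1) :=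
      flat_w_mono hfstep (by omega) hi0 (by omega)
    have hs'le : σ' e0 he0U ≤ l.length := by omega
    have hfz : ∀ f ∈ Y, ∃ y : Fin (N (σ' e0 he0U)), (Gs (σ' e0 he0U)).Adj z y ∧
        f = s(fcomp φs hs'le z, fcomp φs hs'le y) := by
      intro f hf
      obtain ⟨sf, hsf, hsfL, hsf1, a, b, hNAf, hchainf, hfeq, hgt, hlt⟩ :=
        hmain _ _ h0 hwlt f hf
      have ha1 : fcomp φs hsf1 a = φs (σ' e0 he0U) z := (hziff _).mp ⟨hgt, hlt⟩
      have hsfs' : sf < σ' e0 he0U := by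
        by_contra hcon
        have heqs : sf = σ' e0 he0U := by omega
        subst heqs
        rw [fcomp_self φs hsf1 a] at ha1
        unfold NewAt at hNAf
        rcases hNAf with hx | ⟨i1, hi1, hx⟩ | hx
        · rcases Sym2.eq_iff.mp hx with ⟨e1, e2⟩ | ⟨e1, e2⟩
          · rw [e1] at ha1
            exact absurd ((hφm _ hsf).injective ha1).symm (ne_of_gt huz)
          · rw [e1] at ha1
            exact absurd ha1.symm (hfstep.2.2.2.2.1 z 0 (Nat.zero_le _))
        · rcases Sym2.eq_iff.mp hx with ⟨e1, e2⟩ | ⟨e1, e2⟩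
          · rw [e1] at ha1
            exact absurd ha1.symm (hfstep.2.2.2.2.1 z i1 (by omega))
          · rw [e1] at ha1
            exact absurd ha1.symm (hfstep.2.2.2.2.1 z (i1 + 1) hi1)
        · rcases Sym2.eq_iff.mp hx with ⟨e1, e2⟩ | ⟨e1, e2⟩
          · rw [e1] at ha1
            exact absurd ha1.symm (hfstep.2.2.2.2.1 z _ (le_refl _))
          · rw [e1] at ha1
            exact absurd ((hφm _ hsf).injective ha1) (ne_of_gt hzv)
      have hsf1' : sf + 1 ≤ σ' e0 he0U := hsfs'
      have haz : fcomp φs hsf1' a = z := by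
        have hh := fcomp_succ φs hsf1' hsf1 a
        exact (hφm (σ' e0 he0U) hs'L).injective (hh.symm.trans ha1)
      refine ⟨fcomp φs hsf1' b, ?_, ?_⟩
      · have hedge := hchainf (σ' e0 he0U) hsf1' hs'le
        rw [haz] at hedge
        exact (Gs (σ' e0 he0U)).mem_edgeSet.mp hedge
      · refine hfeq.trans ?_
        rw [fcomp_trans φs hsf1' hs'le hsfL a, fcomp_trans φs hsf1' hs'le hsfL b, haz]
    choose FF hFF1 hFF2 using hfz
    have hcard : Y.card ≤ (Finset.univ.filter fun y => (Gs (σ' e0 he0U)).Adj z y).card := by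
      refine Finset.card_le_card_of_injOn
        (fun f => if hf : f ∈ Y then FF f hf else z) ?_ ?_
      · intro f hf
        simp only [Finset.coe_filter, Set.mem_setOf_eq, dif_pos (Finset.mem_coe.mp hf), Finset.mem_filter, Finset.mem_univ, true_and]
        exact hFF1 f hf
      · intro f1 h1 f2 h2 heq12
        simp only [Finset.mem_coe] at h1 h2
        simp only [dif_pos h1, dif_pos h2] at heq12
        rw [hFF2 f1 h1, hFF2 f2 h2, heq12]
    have hdegz := hdegAll (σ' e0 he0U) hs'le z
    have hmax2 : max d 2 ≤ d + 1 := max_le (by omega) (by omega)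
    omega
  · -- e0 is the right boundary path edge
    obtain ⟨f, hf⟩ : Y.Nonempty := Finset.card_pos.mp (by rw [hYcard]; omega)
    obtain ⟨sf, hsf, hsfL, hsf1, a, b, -, -, -, hgt, hlt⟩ :=
      hmain _ _ h0 (flat_wh_lt_phiv hfstep) f hf
    exact flat_no_between_right hfstep _ ⟨hgt, hlt⟩


end StretchPaper
end
end

section
/- For every integer h ≥ 1, the stretch-width of the graph A_3^h is at most 9. -/
open Finset

noncomputable section
open scoped Classical
set_option linter.unusedSectionVars false
set_option linter.unusedVariables false

namespace StretchPaper

/-! ### Partitions, red graphs, component twin-width and stretch-width of graphs -/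

variable {V : Type} [Fintype V] [DecidableEq V]

/-! ### Symmetric 0,1-matrices: stretch-width and divisions -/

variable {n : ℕ}

/-! arithmetic helpers -/

lemma div3_succ (x l : ℕ) : x / 3 ^ (l+1) = x / 3 ^ l / 3 := by
  rw [pow_succ]
  exact (Nat.div_div_eq_div_mul x (3^l) 3).symm

lemma step2 {u v : ℕ} (j : ℕ) (hj : u / 3^(j+1) + 2 ≤ v / 3^(j+1)) :
    u / 3^j + 4 ≤ v / 3^j := by
  have h1 := Nat.div_add_mod (u / 3^j) 3
  have h2 := Nat.div_add_mod (v / 3^j) 3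
  have h3 : u / 3^j % 3 < 3 := Nat.mod_lt _ (by norm_num)
  rw [div3_succ, div3_succ] at hj
  omega

lemma gap_lt {u v m : ℕ} (h2 : u / 3^m + 2 ≤ v / 3^m) :
    ∀ j < m, u / 3^j + 4 ≤ v / 3^j := by
  intro j hj
  obtain ⟨d, hd⟩ : ∃ d, j + d + 1 = m := ⟨m - j - 1, by omega⟩
  induction d generalizing j with
  | zero =>
    apply step2
    rw [show j + 1 = m by omega]
    exact h2
  | succ d ih =>
    have h4 := ih (j+1) (by omega) (by omega)
    exact step2 j (by omega)

lemma adj_transfer {h m c c' : ℕ} (hcc : c + 2 ≤ c') {u v u' v' : Fin (3^h)}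
    (hu : (u:ℕ)/3^m = c) (hv : (v:ℕ)/3^m = c')
    (hu' : (u':ℕ)/3^m = c) (hv' : (v':ℕ)/3^m = c') :
    (Agraph h).Adj u v → (Agraph h).Adj u' v' := by
  rintro ⟨-, l, hl, hd⟩
  have hne' : u' ≠ v' := by
    intro he
    rw [he, hv'] at hu'
    omega
  refine ⟨hne', l, hl, ?_⟩
  rcases lt_or_ge l m with hlm | hlm
  · exfalso
    have g1 : (u:ℕ)/3^l + 4 ≤ (v:ℕ)/3^l := gap_lt (by rw [hu, hv]; omega) l hlm
    omega
  · obtain ⟨j, rfl⟩ : ∃ j, l = m + j := ⟨l - m, by omega⟩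
    have e1 : ∀ x : Fin (3^h), (x:ℕ)/3^(m+j) = ((x:ℕ)/3^m)/3^j := by
      intro x
      rw [pow_add]
      exact (Nat.div_div_eq_div_mul _ _ _).symm
    rw [e1 u, e1 v, hu, hv] at hd
    rw [e1 u', e1 v', hu', hv']
    exact hd

lemma not_inhomog_of_far {h m cX cY : ℕ} {X Y : Finset (Fin (3^h))}
    (hX : ∀ x ∈ X, (x:ℕ)/3^m = cX) (hY : ∀ y ∈ Y, (y:ℕ)/3^m = cY)
    (hfar : cX + 2 ≤ cY ∨ cY + 2 ≤ cX) :
    ¬ Inhomog (Agraph h) X Y := by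
  rintro ⟨⟨x, hx, y, hy, hadj⟩, ⟨x', hx', y', hy', hnadj⟩⟩
  rcases hfar with hf | hf
  · exact hnadj (adj_transfer hf (hX x hx) (hY y hy) (hX x' hx') (hY y' hy') hadj)
  · exact hnadj ((adj_transfer hf (hY y hy) (hX x hx) (hY y' hy') (hX x' hx') hadj.symm).symm)

/-! partition from a part-of function -/

def mkPart {N : ℕ} (f : Fin N → Finset (Fin N))
    (h1 : ∀ v, v ∈ f v) (h2 : ∀ v w, w ∈ f v → f w = f v) :
    Finpartition (Finset.univ : Finset (Fin N)) where
  parts := Finset.univ.image f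
  supIndep := by
    rw [Finset.supIndep_iff_pairwiseDisjoint]
    rintro X hX Y hY hne
    simp only [Finset.coe_image, Set.mem_image, Finset.mem_coe] at hX hY
    obtain ⟨x, -, rfl⟩ := hX
    obtain ⟨y, -, rfl⟩ := hY
    simp only [Function.onFun, id]
    rw [Finset.disjoint_left]
    intro z hzx hzy
    exact hne (by rw [← h2 x z hzx, h2 y z hzy])
  sup_parts := by
    apply le_antisymm
    · exact Finset.sup_le fun X _ => Finset.subset_univ X
    · intro v _
      exact Finset.mem_sup.mpr ⟨f v, Finset.mem_image_of_mem f (Finset.mem_univ v), h1 v⟩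
  bot_notMem := by
    simp only [Finset.bot_eq_empty, Finset.mem_image]
    rintro ⟨v, -, hv⟩
    have := h1 v
    rw [hv] at this
    exact absurd this (Finset.notMem_empty v)

lemma mkPart_parts {N : ℕ} (f : Fin N → Finset (Fin N)) (h1 h2) :
    (mkPart f h1 h2).parts = Finset.univ.image f := rfl

lemma mkPart_congr {N : ℕ} {f g : Fin N → Finset (Fin N)} (hfg : f = g)
    (h1 h2 g1 g2) : mkPart f h1 h2 = mkPart g g1 g2 := by
  subst hfg
  rfl

lemma mergeStep_mk {N : ℕ} (f g : Fin N → Finset (Fin N)) (h1 h2 g1 g2)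
    (A B : Finset (Fin N)) (hA : ∃ v, f v = A) (hB : ∃ v, f v = B) (hAB : A ≠ B)
    (hmerge : ∀ v, f v = A ∨ f v = B → g v = A ∪ B)
    (hkeep : ∀ v, f v ≠ A → f v ≠ B → g v = f v) :
    MergeStep (mkPart f h1 h2) (mkPart g g1 g2) := by
  obtain ⟨va, hva⟩ := hA
  obtain ⟨vb, hvb⟩ := hB
  refine ⟨A, hva ▸ Finset.mem_image_of_mem f (Finset.mem_univ va),
    B, hvb ▸ Finset.mem_image_of_mem f (Finset.mem_univ vb), hAB, ?_⟩
  ext Y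
  simp only [mkPart_parts, Finset.mem_insert, Finset.mem_erase, Finset.mem_image,
    Finset.mem_univ, true_and]
  constructor
  · rintro ⟨v, rfl⟩
    by_cases hfa : f v = A
    · left; rw [hmerge v (Or.inl hfa)]
    · by_cases hfb : f v = B
      · left; rw [hmerge v (Or.inr hfb)]
      · right
        rw [hkeep v hfa hfb]
        exact ⟨hfb, hfa, ⟨v, rfl⟩⟩
  · rintro (rfl | ⟨hYB, hYA, v, rfl⟩)
    · exact ⟨va, hmerge va (Or.inl hva)⟩
    · exact ⟨v, hkeep v hYA hYB⟩

/-! the blocks and the partition states -/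

def blockL (h l a : ℕ) : Finset (Fin (3^h)) :=
  Finset.univ.filter fun y => (y:ℕ)/3^l = a

lemma mem_blockL {h l a : ℕ} {y : Fin (3^h)} : y ∈ blockL h l a ↔ (y:ℕ)/3^l = a := by
  simp [blockL]

def partIdx (h l k : ℕ) (d : ℕ) : Finset (Fin (3^h)) :=
  if d / 3 < k/2 then blockL h (l+1) (d/3)
  else if k % 2 = 1 ∧ d/3 = k/2 ∧ d < 3*(k/2)+2 then
    blockL h l (3*(k/2)) ∪ blockL h l (3*(k/2)+1)
  else blockL h l d

def partAt (h l k : ℕ) (v : Fin (3^h)) : Finset (Fin (3^h)) :=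
  partIdx h l k ((v:ℕ)/3^l)

lemma div3_succ' (x l : ℕ) : x / 3 ^ (l+1) = x / 3 ^ l / 3 := by
  rw [pow_succ]
  exact (Nat.div_div_eq_div_mul x (3^l) 3).symm

lemma mem_partIdx_self (h l k : ℕ) (v : Fin (3^h)) : v ∈ partAt h l k v := by
  unfold partAt partIdx
  split_ifs with hc1 hc2
  · rw [mem_blockL, div3_succ']
  · obtain ⟨hr, hq, hlt⟩ := hc2
    have h30 : 3 * ((v:ℕ)/3^l / 3) ≤ (v:ℕ)/3^l := by omega
    rw [Finset.mem_union, mem_blockL, mem_blockL]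
    omega
  · rw [mem_blockL]

lemma partAt_eq_of_mem (h l k : ℕ) (v w : Fin (3^h)) (hw : w ∈ partAt h l k v) :
    partAt h l k w = partAt h l k v := by
  unfold partAt partIdx at hw ⊢
  split_ifs at hw with hc1 hc2
  · rw [mem_blockL, div3_succ'] at hw
    rw [hw]
    split_ifs with g1 g2 <;> first | rfl | omega
  · obtain ⟨hr, hq, hlt⟩ := hc2
    rw [Finset.mem_union, mem_blockL, mem_blockL] at hw
    split_ifs with g1 g2 <;> first | rfl | omega
  · rw [mem_blockL] at hw
    rw [hw]

/-- every part at state (l,k) contains a full level-l block `a`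
and is contained in the level-(l+1) block `a/3`. -/
lemma partAt_inv (h l k : ℕ) (v : Fin (3^h)) :
    ∃ a : ℕ, (∃ x ∈ partAt h l k v, (x:ℕ)/3^l = a) ∧
      (∀ y : Fin (3^h), (y:ℕ)/3^l = a → y ∈ partAt h l k v) ∧
      (∀ x ∈ partAt h l k v, (x:ℕ)/3^(l+1) = a/3) := by
  have hpow : (0:ℕ) < 3^l := pow_pos (by norm_num) l
  have hpow1 : (0:ℕ) < 3^(l+1) := pow_pos (by norm_num) _
  unfold partAt partIdx
  split_ifs with hc1 hc2
  · -- triple: blockL (l+1) (d/3)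
    set c := (v:ℕ)/3^l/3 with hc
    have hc' : c = (v:ℕ)/3^(l+1) := by rw [hc, div3_succ']
    have hle : c * 3^(l+1) ≤ (v:ℕ) := by
      rw [hc']; exact Nat.div_mul_le_self _ _
    have hsp : c * 3^(l+1) = (3*c) * 3^l := by rw [pow_succ]; ring
    refine ⟨3*c, ⟨⟨c * 3^(l+1), lt_of_le_of_lt hle v.isLt⟩, ?_, ?_⟩, ?_, ?_⟩
    · rw [mem_blockL]
      show (c * 3^(l+1) : ℕ) / 3^(l+1) = c
      exact Nat.mul_div_cancel c hpow1
    · show (c * 3^(l+1) : ℕ) / 3^l = 3*c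
      rw [hsp]
      exact Nat.mul_div_cancel _ hpow
    · intro y hy
      rw [mem_blockL, div3_succ']
      omega
    · intro x hx
      rw [mem_blockL] at hx
      rw [hx]
      omega
  · -- double
    obtain ⟨hr, hq, hlt⟩ := hc2
    set q := k/2 with hqdef
    have h3q : 3*q ≤ (v:ℕ)/3^l := by omega
    have hle : 3*q * 3^l ≤ (v:ℕ) :=
      le_trans (Nat.mul_le_mul_right _ h3q) (Nat.div_mul_le_self _ _)
    have hdv : (3*q * 3^l : ℕ) / 3^l = 3*q := Nat.mul_div_cancel _ hpow
    refine ⟨3*q, ⟨⟨3*q * 3^l, lt_of_le_of_lt hle v.isLt⟩, ?_, ?_⟩, ?_, ?_⟩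
    · rw [Finset.mem_union, mem_blockL]
      left
      exact hdv
    · exact hdv
    · intro y hy
      rw [Finset.mem_union, mem_blockL]
      left; exact hy
    · intro x hx
      rw [Finset.mem_union, mem_blockL, mem_blockL] at hx
      rw [div3_succ']
      omega
  · -- single
    refine ⟨(v:ℕ)/3^l, ⟨v, by rw [mem_blockL], rfl⟩, ?_, ?_⟩
    · intro y hy
      rw [mem_blockL]; exact hy
    · intro x hx
      rw [mem_blockL] at hx
      rw [div3_succ', hx]


lemma pow3_pos (l : ℕ) : (0:ℕ) < 3^l := pow_pos (by norm_num) l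

lemma partAt_val (h l k a : ℕ) (hlt : a * 3^l < 3^h) :
    partAt h l k ⟨a * 3^l, hlt⟩ = partIdx h l k a := by
  unfold partAt
  congr 1
  exact Nat.mul_div_cancel a (pow3_pos l)

lemma div_lt_pow (h l : ℕ) (hl : l ≤ h) (v : Fin (3^h)) : (v:ℕ)/3^l < 3^(h-l) := by
  rw [Nat.div_lt_iff_lt_mul (pow3_pos l), ← pow_add]
  rw [show h - l + l = h by omega]
  exact v.isLt

lemma merge_stage (h l k : ℕ) (hl : l < h) (hk : k + 1 ≤ 2 * 3^(h-l-1)) :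
    MergeStep (mkPart (partAt h l k) (mem_partIdx_self h l k) (partAt_eq_of_mem h l k))
              (mkPart (partAt h l (k+1)) (mem_partIdx_self h l (k+1)) (partAt_eq_of_mem h l (k+1))) := by
  have h3M : 3^(h-l) = 3^(h-l-1) * 3 := by
    rw [← pow_succ]
    congr 1
    omega
  set M := 3^(h-l-1) with hM
  set q := k/2 with hq
  have hbound : ∀ a : ℕ, a < 3^(h-l) → a * 3^l < 3^h := by
    intro a ha
    calc a * 3^l < 3^(h-l) * 3^l := (Nat.mul_lt_mul_right (pow3_pos l)).mpr ha
      _ = 3^h := by rw [← pow_add]; congr 1; omega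
  have hdlt : ∀ v : Fin (3^h), (v:ℕ)/3^l < 3^(h-l) := div_lt_pow h l (le_of_lt hl)
  rcases Nat.mod_two_eq_zero_or_one k with hk0 | hk1
  · -- k even: merge blocks 3q and 3q+1 into the double
    have hq1 : 3*q+1 < 3^(h-l) := by omega
    have hq0 : 3*q < 3^(h-l) := by omega
    refine mergeStep_mk _ _ _ _ _ _ (blockL h l (3*q)) (blockL h l (3*q+1))
      ⟨⟨3*q * 3^l, hbound _ hq0⟩, ?_⟩ ⟨⟨(3*q+1) * 3^l, hbound _ hq1⟩, ?_⟩ ?_ ?_ ?_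
    · rw [partAt_val]
      unfold partIdx
      split_ifs with g1 g2 <;> first | rfl | omega
    · rw [partAt_val]
      unfold partIdx
      split_ifs with g1 g2 <;> first | rfl | omega
    · -- A ≠ B
      intro he
      have hmem : (⟨3*q * 3^l, hbound _ hq0⟩ : Fin (3^h)) ∈ blockL h l (3*q) := by
        rw [mem_blockL]
        exact Nat.mul_div_cancel _ (pow3_pos l)
      rw [he, mem_blockL] at hmem
      rw [Nat.mul_div_cancel _ (pow3_pos l)] at hmem
      omega
    · -- hmerge
      intro v hv
      have hvin := mem_partIdx_self h l k v
      have hd : (v:ℕ)/3^l = 3*q ∨ (v:ℕ)/3^l = 3*q+1 := by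
        rcases hv with hv | hv <;> rw [hv, mem_blockL] at hvin <;> omega
      unfold partAt partIdx
      split_ifs with g1 g2
      · omega
      · have : (k+1)/2 = q := by omega
        rw [this]
      · exfalso
        apply g2
        refine ⟨by omega, by omega, by omega⟩
    · -- hkeep
      intro v hA hB
      have hd1 : (v:ℕ)/3^l ≠ 3*q := by
        intro he
        apply hA
        unfold partAt partIdx
        rw [he]
        split_ifs with g1 g2 <;> first | rfl | omega
      have hd2 : (v:ℕ)/3^l ≠ 3*q+1 := by
        intro he
        apply hB
        unfold partAt partIdx
        rw [he]
        split_ifs with g1 g2 <;> first | rfl | omega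
      unfold partAt partIdx
      split_ifs with g1 g2 g3 g4 g5 <;> first | rfl | omega
  · -- k odd: merge the double with block 3q+2 into the triple
    have hk2 : k = 2*q + 1 := by omega
    have hq2 : 3*q+2 < 3^(h-l) := by omega
    have hq0 : 3*q < 3^(h-l) := by omega
    have hU : blockL h (l+1) q = (blockL h l (3*q) ∪ blockL h l (3*q+1)) ∪ blockL h l (3*q+2) := by
      ext y
      simp only [Finset.mem_union, mem_blockL, div3_succ']
      omega
    refine mergeStep_mk _ _ _ _ _ _ (blockL h l (3*q) ∪ blockL h l (3*q+1)) (blockL h l (3*q+2))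
      ⟨⟨3*q * 3^l, hbound _ hq0⟩, ?_⟩ ⟨⟨(3*q+2) * 3^l, hbound _ hq2⟩, ?_⟩ ?_ ?_ ?_
    · rw [partAt_val]
      unfold partIdx
      split_ifs with g1 g2
      · omega
      · rfl
      · exfalso; apply g2; refine ⟨by omega, by omega, by omega⟩
    · rw [partAt_val]
      unfold partIdx
      split_ifs with g1 g2 <;> first | rfl | omega
    · -- A ≠ B
      intro he
      have hmem : (⟨3*q * 3^l, hbound _ hq0⟩ : Fin (3^h)) ∈ blockL h l (3*q) ∪ blockL h l (3*q+1) := by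
        rw [Finset.mem_union, mem_blockL]
        left
        exact Nat.mul_div_cancel _ (pow3_pos l)
      rw [he, mem_blockL] at hmem
      rw [Nat.mul_div_cancel _ (pow3_pos l)] at hmem
      omega
    · -- hmerge
      intro v hv
      have hvin := mem_partIdx_self h l k v
      have hd : (v:ℕ)/3^l = 3*q ∨ (v:ℕ)/3^l = 3*q+1 ∨ (v:ℕ)/3^l = 3*q+2 := by
        rcases hv with hv | hv <;> rw [hv] at hvin
        · rw [Finset.mem_union, mem_blockL, mem_blockL] at hvin
          omega
        · rw [mem_blockL] at hvin
          omega
      unfold partAt partIdx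
      split_ifs with g1 g2
      · have hdq : (v:ℕ)/3^l/3 = q := by omega
        rw [hdq, hU]
      · omega
      · omega
    · -- hkeep
      intro v hA hB
      have hdq : (v:ℕ)/3^l/3 ≠ q := by
        intro he
        rcases lt_or_ge ((v:ℕ)/3^l) (3*q+2) with hlt2 | hge2
        · apply hA
          unfold partAt partIdx
          split_ifs with g1 g2
          · omega
          · rfl
          · exfalso; apply g2; refine ⟨by omega, by omega, by omega⟩
        · have he2 : (v:ℕ)/3^l = 3*q+2 := by omega
          apply hB
          unfold partAt partIdx
          rw [he2]
          split_ifs with g1 g2 <;> first | rfl | omega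
      unfold partAt partIdx
      split_ifs with g1 g2 g3 g4 g5 <;> first | rfl | omega

lemma partAt_last (h l : ℕ) (hl : l < h) :
    partAt h l (2 * 3^(h-l-1)) = partAt h (l+1) 0 := by
  funext v
  have h3M : 3^(h-l) = 3^(h-l-1) * 3 := by
    rw [← pow_succ]
    congr 1
    omega
  have hdlt : (v:ℕ)/3^l < 3^(h-l) := div_lt_pow h l (le_of_lt hl) v
  have hk2 : 2 * 3^(h-l-1) / 2 = 3^(h-l-1) := by omega
  unfold partAt partIdx
  rw [div3_succ']
  have c1 : (v:ℕ)/3^l/3 < 2*3^(h-l-1)/2 := by omega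
  rw [if_pos c1, if_neg (by simp : ¬ ((v:ℕ)/3^l/3/3 < 0/2)),
    if_neg (by intro hcon; exact absurd hcon.1 (by norm_num) : ¬ ((0:ℕ)%2 = 1 ∧ (v:ℕ)/3^l/3/3 = 0/2 ∧ (v:ℕ)/3^l/3 < 3*(0/2)+2))]


/-! the decoding of the global time into (level, inner step) -/

lemma Eidx_ex (h t : ℕ) : ∃ e, 3^h - t ≤ 3^e := ⟨h, Nat.sub_le _ _⟩

def Eidx (h t : ℕ) : ℕ := Nat.find (Eidx_ex h t)

lemma Eidx_spec (h t : ℕ) : 3^h - t ≤ 3^(Eidx h t) := Nat.find_spec (Eidx_ex h t)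

lemma Eidx_min (h t : ℕ) : ∀ e < Eidx h t, ¬ (3^h - t ≤ 3^e) :=
  fun e he => Nat.find_min (Eidx_ex h t) he

lemma Eidx_le (h t : ℕ) : Eidx h t ≤ h := Nat.find_le (Nat.sub_le _ _)

lemma Eidx_eq (h t e : ℕ) (h1 : 3^h - t ≤ 3^e) (h2 : ∀ e' < e, ¬(3^h - t ≤ 3^e')) :
    Eidx h t = e := (Nat.find_eq_iff _).mpr ⟨h1, h2⟩

def Pt (h t : ℕ) : Finpartition (Finset.univ : Finset (Fin (3^h))) :=
  mkPart (partAt h (h - Eidx h t) (t - (3^h - 3^(Eidx h t))))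
    (mem_partIdx_self h _ _) (partAt_eq_of_mem h _ _)

lemma Pt_eq (h t l k : ℕ) (hl : h - Eidx h t = l) (hk : t - (3^h - 3^(Eidx h t)) = k) :
    Pt h t = mkPart (partAt h l k) (mem_partIdx_self h l k) (partAt_eq_of_mem h l k) := by
  subst hl
  subst hk
  rfl

lemma Pt_merge (h t : ℕ) (ht : t + 1 < 3^h) : MergeStep (Pt h t) (Pt h (t+1)) := by
  set e := Eidx h t with he
  have hspec : 3^h - t ≤ 3^e := Eidx_spec h t
  have hmin := Eidx_min h t
  have he_le : e ≤ h := Eidx_le h t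
  have he_pos : 1 ≤ e := by
    rcases Nat.eq_zero_or_pos e with h0 | h1
    · exfalso
      rw [h0] at hspec
      simp at hspec
      omega
    · exact h1
  have h3e : 3^e = 3^(e-1) * 3 := by
    rw [← pow_succ]
    congr 1
    omega
  have h3eh : 3^e ≤ 3^h := Nat.pow_le_pow_right (by norm_num) he_le
  set M := 3^(e-1) with hM
  have hMlt : ¬ (3^h - t ≤ M) := hmin (e-1) (by omega)
  set l := h - e with hl
  have hll : l < h := by omega
  have hle : h - l = e := by omega
  have hle1 : h - l - 1 = e - 1 := by omega
  set k := t - (3^h - 3^e) with hk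
  have htk : t = 3^h - 3^e + k := by omega
  have hkmax : k + 1 ≤ 2 * M := by omega
  have hPt : Pt h t = mkPart (partAt h l k) (mem_partIdx_self h l k) (partAt_eq_of_mem h l k) :=
    Pt_eq h t l k rfl rfl
  rcases lt_or_eq_of_le hkmax with hklt | hkeq
  · -- stay in the same stage
    have hE' : Eidx h (t+1) = e := by
      apply Eidx_eq
      · omega
      · intro e' he'
        have : 3^e' ≤ M := by
          rw [hM]
          exact Nat.pow_le_pow_right (by norm_num) (by omega)
        omega
    have hPt' : Pt h (t+1) = mkPart (partAt h l (k+1)) (mem_partIdx_self h l (k+1))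
        (partAt_eq_of_mem h l (k+1)) := by
      apply Pt_eq
      · rw [hE']
      · rw [hE']
        omega
    rw [hPt, hPt']
    exact merge_stage h l k hll (by rw [hle1]; omega)
  · -- stage boundary
    have hE' : Eidx h (t+1) = e - 1 := by
      apply Eidx_eq
      · omega
      · intro e' he'
        have h1 : 3^e' * 3 ≤ M := by
          calc 3^e' * 3 = 3^(e'+1) := (pow_succ 3 e').symm
            _ ≤ 3^(e-1) := Nat.pow_le_pow_right (by norm_num) (by omega)
        omega
    have h3e1 : 3^(e-1) = M := rfl
    have hPt' : Pt h (t+1) = mkPart (partAt h (l+1) 0) (mem_partIdx_self h (l+1) 0)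
        (partAt_eq_of_mem h (l+1) 0) := by
      apply Pt_eq
      · rw [hE']
        omega
      · rw [hE', h3e1]
        omega
    have hpa : partAt h l (k+1) = partAt h (l+1) 0 := by
      rw [show k+1 = 2*3^(h-l-1) by rw [hle1]; omega]
      exact partAt_last h l hll
    rw [hPt, hPt', ← mkPart_congr hpa (mem_partIdx_self h l (k+1)) (partAt_eq_of_mem h l (k+1)) _ _]
    exact merge_stage h l k hll (by rw [hle1]; omega)

def theList (h : ℕ) : List (Finpartition (Finset.univ : Finset (Fin (3^h)))) :=
  (List.range (3^h)).map (Pt h)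

lemma theList_chain (h : ℕ) : (theList h).Chain' MergeStep := by
  have hpos : 0 < 3^h := pow3_pos h
  have hr : List.range (3^h) = List.range ((3^h - 1) + 1) := by congr 1; omega
  show List.IsChain MergeStep ((List.range (3^h)).map (Pt h))
  rw [List.isChain_map, hr, List.isChain_range_succ]
  intro m hm
  exact Pt_merge h m (by omega)

lemma theList_head (h : ℕ) :
    ∃ P, (theList h).head? = some P ∧ ∀ X ∈ P.parts, X.card = 1 := by
  have hpos : 0 < 3^h := pow3_pos h
  refine ⟨Pt h 0, ?_, ?_⟩
  · have hr : List.range (3^h) = List.range ((3^h - 1) + 1) := by congr 1; omega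
    rw [theList, hr, List.range_succ_eq_map]
    rfl
  · intro X hX
    have hE0 : Eidx h 0 = h := by
      apply Eidx_eq
      · simp
      · intro e' he'
        have := Nat.pow_lt_pow_right (by norm_num : 1 < 3) he'
        omega
    have hP0 : Pt h 0 = mkPart (partAt h 0 0) (mem_partIdx_self h 0 0) (partAt_eq_of_mem h 0 0) :=
      Pt_eq h 0 0 0 (by rw [hE0]; omega) (by omega)
    rw [hP0, mkPart_parts, Finset.mem_image] at hX
    obtain ⟨v, -, rfl⟩ := hX
    rw [Finset.card_eq_one]
    refine ⟨v, ?_⟩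
    ext y
    unfold partAt partIdx
    rw [if_neg (by simp), if_neg (by intro hcon; exact absurd hcon.1 (by norm_num))]
    rw [mem_blockL, Finset.mem_singleton]
    simp [Fin.ext_iff]

lemma theList_last (h : ℕ) :
    ∃ P, (theList h).getLast? = some P ∧ P.parts = {Finset.univ} := by
  have hpos : 0 < 3^h := pow3_pos h
  refine ⟨Pt h (3^h - 1), ?_, ?_⟩
  · have hr : List.range (3^h) = List.range ((3^h - 1) + 1) := by congr 1; omega
    rw [theList, hr, List.range_succ, List.map_append]
    exact List.getLast?_concat
  · have hE : Eidx h (3^h - 1) = 0 := by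
      apply Eidx_eq
      · simp
        omega
      · omega
    have hP : Pt h (3^h - 1) = mkPart (partAt h h 0) (mem_partIdx_self h h 0)
        (partAt_eq_of_mem h h 0) :=
      Pt_eq h _ h 0 (by rw [hE]; omega) (by rw [hE]; omega)
    have huniv : ∀ v : Fin (3^h), partAt h h 0 v = Finset.univ := by
      intro v
      unfold partAt partIdx
      rw [if_neg (by simp), if_neg (by intro hcon; exact absurd hcon.1 (by norm_num))]
      ext y
      rw [mem_blockL]
      simp only [Finset.mem_univ, iff_true]
      rw [Nat.div_eq_of_lt y.isLt, Nat.div_eq_of_lt v.isLt]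
    rw [hP, mkPart_parts]
    ext Y
    simp only [Finset.mem_image, Finset.mem_univ, true_and, Finset.mem_singleton]
    constructor
    · rintro ⟨v, rfl⟩
      exact huniv v
    · rintro rfl
      exact ⟨⟨0, hpos⟩, huniv _⟩

lemma theList_isSeq (h : ℕ) : IsPartitionSeq (theList h) :=
  ⟨theList_head h, theList_last h, theList_chain h⟩

/-! the stretch bound -/

lemma stretch_le_9 (h m : ℕ) (P : Finpartition (Finset.univ : Finset (Fin (3^h))))
    (hinv : ∀ X ∈ P.parts, ∃ a : ℕ,
      (∃ x ∈ X, (x:ℕ)/3^m = a) ∧ (∀ y : Fin (3^h), (y:ℕ)/3^m = a → y ∈ X) ∧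
      (∀ x ∈ X, (x:ℕ)/3^(m+1) = a/3)) :
    stretchPartition (Agraph h) P ≤ 9 := by
  choose A hA1 hA2 hA3 using hinv
  rw [stretchPartition]
  apply Finset.sup_le
  intro X hX
  set a := A X hX with ha
  set c := a / 3 with hc
  have hXc : ∀ x ∈ X, (x:ℕ)/3^(m+1) = c := hA3 X hX
  have hnbhd : ∀ z ∈ redClosedNbhd (Agraph h) P X,
      c ≤ (z:ℕ)/3^(m+1) + 1 ∧ (z:ℕ)/3^(m+1) ≤ c + 1 := by
    intro z hz
    rw [redClosedNbhd, Finset.mem_union] at hz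
    rcases hz with hz | hz
    · rw [hXc z hz]
      omega
    · rw [Finset.mem_biUnion] at hz
      obtain ⟨Y, hY, hzY⟩ := hz
      rw [Finset.mem_filter] at hY
      obtain ⟨hYparts, hYne, hYinh⟩ := hY
      have hYc := hA3 Y hYparts
      have hfar : ¬ (c + 2 ≤ A Y hYparts / 3 ∨ A Y hYparts / 3 + 2 ≤ c) :=
        fun hf => not_inhomog_of_far hXc hYc hf hYinh
      rw [hYc z hzY]
      omega
  have hconvn : ∀ z ∈ conv (redClosedNbhd (Agraph h) P X),
      c ≤ (z:ℕ)/3^(m+1) + 1 ∧ (z:ℕ)/3^(m+1) ≤ c + 1 := by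
    intro z hz
    simp only [conv, Finset.mem_filter] at hz
    obtain ⟨-, ⟨p, hp, hpz⟩, qq, hq, hzq⟩ := hz
    have h1 := hnbhd p hp
    have h2 := hnbhd qq hq
    have hm1 : (p:ℕ)/3^(m+1) ≤ (z:ℕ)/3^(m+1) := Nat.div_le_div_right (Fin.le_def.mp hpz)
    have hm2 : (z:ℕ)/3^(m+1) ≤ (qq:ℕ)/3^(m+1) := Nat.div_le_div_right (Fin.le_def.mp hzq)
    omega
  rw [stretchPart]
  have hcard : ((Finset.Icc (3*c-3) (3*c+5))).card ≤ 9 := by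
    rw [Nat.card_Icc]
    omega
  refine le_trans (Finset.card_le_card_of_injOn
    (fun Y => if hY : Y ∈ P.parts then A Y hY else 0) ?_ ?_) hcard
  · intro Y hYf
    rw [Finset.mem_coe, Finset.mem_filter, Finset.mem_erase] at hYf
    obtain ⟨⟨hYX, hYp⟩, hconf⟩ := hYf
    simp only [dif_pos hYp]
    obtain ⟨z, hz⟩ := hconf
    rw [Finset.mem_inter] at hz
    obtain ⟨hz1, hz2⟩ := hz
    have hYc := hA3 Y hYp
    have hzY : (z:ℕ)/3^(m+1) = A Y hYp / 3 := by
      simp only [conv, Finset.mem_filter] at hz1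
      obtain ⟨-, ⟨p, hp, hpz⟩, qq, hq, hzq⟩ := hz1
      have h1 := hYc p hp
      have h2 := hYc qq hq
      have hm1 : (p:ℕ)/3^(m+1) ≤ (z:ℕ)/3^(m+1) := Nat.div_le_div_right (Fin.le_def.mp hpz)
      have hm2 : (z:ℕ)/3^(m+1) ≤ (qq:ℕ)/3^(m+1) := Nat.div_le_div_right (Fin.le_def.mp hzq)
      omega
    have hb := hconvn z hz2
    rw [Finset.mem_coe, Finset.mem_Icc]
    omega
  · intro Y hY Y' hY' heq
    simp only [Finset.coe_filter, Set.mem_setOf_eq, Finset.mem_erase] at hY hY'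
    obtain ⟨⟨hYX, hYp⟩, -⟩ := hY
    obtain ⟨⟨hY'X, hY'p⟩, -⟩ := hY'
    simp only [dif_pos hYp, dif_pos hY'p] at heq
    obtain ⟨xY, hxY, hxYa⟩ := hA1 Y hYp
    have hxY' : xY ∈ Y' := hA2 Y' hY'p xY (by rw [hxYa, heq])
    by_contra hne
    exact Finset.disjoint_left.mp (P.disjoint hYp hY'p hne) hxY hxY'

lemma theList_stretch (h : ℕ) :
    ∀ P ∈ theList h, stretchPartition (Agraph h) P ≤ 9 := by
  intro P hP
  rw [theList, List.mem_map] at hP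
  obtain ⟨t, -, rfl⟩ := hP
  apply stretch_le_9 h (h - Eidx h t)
  intro X hX
  have hp := Pt_eq h t (h - Eidx h t) (t - (3^h - 3^(Eidx h t))) rfl rfl
  rw [hp, mkPart_parts, Finset.mem_image] at hX
  obtain ⟨v, -, rfl⟩ := hX
  exact partAt_inv h _ _ v


/-- The stretch-width of `A_3^h` is at most 9. -/
theorem stw_Agraph_le_nine (h : ℕ) (hh : 1 ≤ h) : stw (Agraph h) ≤ 9 := by
  have h9 : stwOrd (Agraph h) ≤ 9 := by
    apply Nat.sInf_le
    exact ⟨theList h, theList_isSeq h, theList_stretch h⟩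
  refine le_trans (Nat.sInf_le ?_) h9
  exact ⟨inferInstance, rfl⟩

end StretchPaper
end
end
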